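/- arXiv:1302.0901 — 5 statements merged into one kernel-verified Lean document; each statement's English description precedes it below -/
import Mathlib

section
/- Let θ₀ : [-1,1] → ℝ be continuous, odd on [-1,1] (θ₀(s) = -θ₀(-s)), even on [0,1] (θ₀(s) = θ₀(1-s) for s ∈ [0,1]), and odd on [0,1/2] (θ₀(s) = -θ₀(1/2 - s) for s ∈ [0,1/2]). Then ∫_{-1}^{1} cos(θ₀(s)) sin(θ₀(s)) · (∫_{-1}^{s} cos(θ₀(σ)) dσ) ds = 0. -/
open Set Real intervalIntegral

lemma aux_integral_zero (g q : ℝ → ℝ) (hgc : Continuous g) (hqc : Continuous q)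
    (hq1 : ∀ x ∈ Icc (-1 : ℝ) 1, q (-x) = -q x)
    (hg1 : ∀ x ∈ Icc (-1 : ℝ) 1, g (-x) = g x)
    (hq2 : ∀ x ∈ Icc (0 : ℝ) 1, q (1 - x) = q x)
    (hg2 : ∀ x ∈ Icc (0 : ℝ) 1, g (1 - x) = g x)
    (hq3 : ∀ x ∈ Icc (0 : ℝ) (1 / 2), q (1 / 2 - x) = -q x) :
    (∫ s in (-1 : ℝ)..1, q s * ∫ σ in (-1 : ℝ)..s, g σ) = 0 := by
  have hgi : ∀ a b : ℝ, IntervalIntegrable g MeasureTheory.volume a b :=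
    fun a b => hgc.intervalIntegrable a b
  have hqi : ∀ a b : ℝ, IntervalIntegrable q MeasureTheory.volume a b :=
    fun a b => hqc.intervalIntegrable a b
  set F : ℝ → ℝ := fun s => ∫ σ in (-1 : ℝ)..s, g σ with hFdef
  have hFc : Continuous F := intervalIntegral.continuous_primitive hgi (-1)
  have hFs : ∀ x : ℝ, F x = ∫ σ in (-1 : ℝ)..x, g σ := fun x => rfl
  -- K = ∫_0^{1/2} q = 0
  have hK0 : (∫ x in (0 : ℝ)..(1 / 2), q x) = 0 := by
    have e1 : (∫ x in (0 : ℝ)..(1 / 2), q (1 / 2 - x)) = ∫ x in (0 : ℝ)..(1 / 2), q x := by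
      rw [intervalIntegral.integral_comp_sub_left]; norm_num
    have e2 : (∫ x in (0 : ℝ)..(1 / 2), q (1 / 2 - x)) = ∫ x in (0 : ℝ)..(1 / 2), -q x := by
      apply intervalIntegral.integral_congr
      intro x hx
      rw [uIcc_of_le (by norm_num : (0:ℝ) ≤ 1 / 2)] at hx
      exact hq3 x hx
    rw [intervalIntegral.integral_neg] at e2
    linarith [e1, e2]
  -- K1 = ∫_0^1 q = 0
  have hK1 : (∫ x in (0 : ℝ)..1, q x) = 0 := by
    have e0 := intervalIntegral.integral_add_adjacent_intervals
      (a := 0) (b := 1 / 2) (c := 1) (hqi 0 (1/2)) (hqi (1/2) 1)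
    have e1 : (∫ x in (0 : ℝ)..(1 / 2), q (1 - x)) = ∫ x in (1 / 2 : ℝ)..1, q x := by
      rw [intervalIntegral.integral_comp_sub_left]; norm_num
    have e2 : (∫ x in (0 : ℝ)..(1 / 2), q (1 - x)) = ∫ x in (0 : ℝ)..(1 / 2), q x := by
      apply intervalIntegral.integral_congr
      intro x hx
      rw [uIcc_of_le (by norm_num : (0:ℝ) ≤ 1 / 2)] at hx
      exact hq2 x ⟨hx.1, hx.2.trans (by norm_num)⟩
    linarith [e0, e1, e2]
  -- F (-s) = F 1 - F s for s ∈ [-1,1]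
  have hFneg : ∀ s ∈ Icc (-1 : ℝ) 1, F (-s) = F 1 - F s := by
    intro s hs
    have e1 := intervalIntegral.integral_comp_neg (a := s) (b := 1) g
    have e2 : (∫ x in s..1, g (-x)) = ∫ x in s..1, g x := by
      apply intervalIntegral.integral_congr
      intro x hx
      rw [uIcc_of_le hs.2] at hx
      exact hg1 x ⟨hs.1.trans hx.1, hx.2⟩
    have e3 := intervalIntegral.integral_add_adjacent_intervals
      (a := (-1 : ℝ)) (b := s) (c := 1) (hgi (-1) s) (hgi s 1)
    rw [hFs (-s), hFs s, hFs 1]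
    linarith [e1, e2, e3]
  -- F (1 - s) = F 1 + F 0 - F s for s ∈ [0,1]
  have hF1s : ∀ s ∈ Icc (0 : ℝ) 1, F (1 - s) = F 1 + F 0 - F s := by
    intro s hs
    have e1 := intervalIntegral.integral_comp_sub_left (a := 0) (b := s) g 1
    rw [sub_zero] at e1
    have e2 : (∫ x in (0 : ℝ)..s, g (1 - x)) = ∫ x in (0 : ℝ)..s, g x := by
      apply intervalIntegral.integral_congr
      intro x hx
      rw [uIcc_of_le hs.1] at hx
      exact hg2 x ⟨hx.1, hx.2.trans hs.2⟩
    have e3 := intervalIntegral.integral_add_adjacent_intervals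
      (a := (-1 : ℝ)) (b := 1 - s) (c := 1) (hgi (-1) (1 - s)) (hgi (1 - s) 1)
    have e4 := intervalIntegral.integral_add_adjacent_intervals
      (a := (-1 : ℝ)) (b := 0) (c := s) (hgi (-1) 0) (hgi 0 s)
    rw [hFs (1 - s), hFs 1, hFs 0, hFs s]
    linarith [e1, e2, e3, e4]
  have hqFi : ∀ a b : ℝ, IntervalIntegrable (fun x => q x * F x) MeasureTheory.volume a b :=
    fun a b => (hqc.mul hFc).intervalIntegrable a b
  -- A' = ∫_0^1 q F = 0
  have hA : (∫ x in (0 : ℝ)..1, q x * F x) = 0 := by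
    have e1 : (∫ x in (0 : ℝ)..1, q (1 - x) * F (1 - x)) = ∫ x in (0 : ℝ)..1, q x * F x := by
      rw [intervalIntegral.integral_comp_sub_left (fun x => q x * F x) 1]; norm_num
    have e2 : (∫ x in (0 : ℝ)..1, q (1 - x) * F (1 - x))
        = ∫ x in (0 : ℝ)..1, (q x * (F 1 + F 0) - q x * F x) := by
      apply intervalIntegral.integral_congr
      intro x hx
      rw [uIcc_of_le (by norm_num : (0:ℝ) ≤ 1)] at hx
      show q (1 - x) * F (1 - x) = q x * (F 1 + F 0) - q x * F x
      rw [hq2 x hx, hF1s x hx]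
      ring
    have e3 : (∫ x in (0 : ℝ)..1, (q x * (F 1 + F 0) - q x * F x))
        = (∫ x in (0 : ℝ)..1, q x * (F 1 + F 0)) - ∫ x in (0 : ℝ)..1, q x * F x :=
      intervalIntegral.integral_sub
        ((hqc.mul continuous_const).intervalIntegrable 0 1) (hqFi 0 1)
    have e4 : (∫ x in (0 : ℝ)..1, q x * (F 1 + F 0))
        = (∫ x in (0 : ℝ)..1, q x) * (F 1 + F 0) :=
      intervalIntegral.integral_mul_const _ _
    rw [hK1, zero_mul] at e4
    linarith [e1, e2, e3, e4]
  -- ∫_{-1}^0 q F = 0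
  have hB : (∫ x in (-1 : ℝ)..0, q x * F x) = 0 := by
    have e1 : (∫ x in (0 : ℝ)..1, q (-x) * F (-x)) = ∫ x in (-1 : ℝ)..0, q x * F x := by
      rw [intervalIntegral.integral_comp_neg (fun x => q x * F x)]; norm_num
    have e2 : (∫ x in (0 : ℝ)..1, q (-x) * F (-x))
        = ∫ x in (0 : ℝ)..1, (q x * F x - q x * F 1) := by
      apply intervalIntegral.integral_congr
      intro x hx
      rw [uIcc_of_le (by norm_num : (0:ℝ) ≤ 1)] at hx
      have hx' : x ∈ Icc (-1 : ℝ) 1 := ⟨by linarith [hx.1], hx.2⟩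
      show q (-x) * F (-x) = q x * F x - q x * F 1
      rw [hq1 x hx', hFneg x hx']
      ring
    have e3 : (∫ x in (0 : ℝ)..1, (q x * F x - q x * F 1))
        = (∫ x in (0 : ℝ)..1, q x * F x) - ∫ x in (0 : ℝ)..1, q x * F 1 :=
      intervalIntegral.integral_sub (hqFi 0 1)
        ((hqc.mul continuous_const).intervalIntegrable 0 1)
    have e4 : (∫ x in (0 : ℝ)..1, q x * F 1) = (∫ x in (0 : ℝ)..1, q x) * F 1 :=
      intervalIntegral.integral_mul_const _ _
    rw [hK1, zero_mul] at e4
    linarith [e1, e2, e3, e4, hA]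
  have e5 := intervalIntegral.integral_add_adjacent_intervals
    (a := (-1 : ℝ)) (b := 0) (c := 1) (hqFi (-1) 0) (hqFi 0 1)
  show (∫ s in (-1 : ℝ)..1, q s * F s) = 0
  linarith [e5, hA, hB]

theorem integral_cos_sin_primitive_cos (θ₀ : ℝ → ℝ) (hc : Continuous θ₀)
    (h1 : ∀ s ∈ Icc (-1 : ℝ) 1, θ₀ s = -θ₀ (-s))
    (h2 : ∀ s ∈ Icc (0 : ℝ) 1, θ₀ s = θ₀ (1 - s))
    (h3 : ∀ s ∈ Icc (0 : ℝ) (1 / 2), θ₀ s = -θ₀ (1 / 2 - s)) :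
    (∫ s in (-1 : ℝ)..1,
      cos (θ₀ s) * sin (θ₀ s) * ∫ σ in (-1 : ℝ)..s, cos (θ₀ σ)) = 0 := by
  have hq1 : ∀ x ∈ Icc (-1 : ℝ) 1, cos (θ₀ (-x)) * sin (θ₀ (-x)) = -(cos (θ₀ x) * sin (θ₀ x)) := by
    intro x hx
    have h : θ₀ (-x) = -θ₀ x := by have := h1 x hx; linarith
    rw [h, Real.cos_neg, Real.sin_neg]; ring
  have hg1 : ∀ x ∈ Icc (-1 : ℝ) 1, cos (θ₀ (-x)) = cos (θ₀ x) := by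
    intro x hx
    have h : θ₀ (-x) = -θ₀ x := by have := h1 x hx; linarith
    rw [h, Real.cos_neg]
  have hq2 : ∀ x ∈ Icc (0 : ℝ) 1, cos (θ₀ (1 - x)) * sin (θ₀ (1 - x)) = cos (θ₀ x) * sin (θ₀ x) := by
    intro x hx
    rw [← h2 x hx]
  have hg2 : ∀ x ∈ Icc (0 : ℝ) 1, cos (θ₀ (1 - x)) = cos (θ₀ x) := by
    intro x hx
    rw [← h2 x hx]
  have hq3 : ∀ x ∈ Icc (0 : ℝ) (1 / 2),
      cos (θ₀ (1 / 2 - x)) * sin (θ₀ (1 / 2 - x)) = -(cos (θ₀ x) * sin (θ₀ x)) := by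
    intro x hx
    have h : θ₀ (1 / 2 - x) = -θ₀ x := by have := h3 x hx; linarith
    rw [h, Real.cos_neg, Real.sin_neg]; ring
  exact aux_integral_zero (fun σ => cos (θ₀ σ)) (fun s => cos (θ₀ s) * sin (θ₀ s))
    (continuous_cos.comp hc) ((continuous_cos.comp hc).mul (continuous_sin.comp hc))
    hq1 hg1 hq2 hg2 hq3
end

section
/- Let θ₀ : [-1,1] → ℝ be continuous, odd on [-1,1] (θ₀(s) = -θ₀(-s)), even on [-1,0] (θ₀(s) = θ₀(-1-s) for s ∈ [-1,0]), and odd on [-1/2,0] (θ₀(s) = -θ₀(-1/2-s) for s ∈ [-1/2,0]). Then ∫_{-1}^{1} sin²(θ₀(s)) · (∫_{-1}^{s} sin(θ₀(σ)) dσ) ds = 0. -/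
open Set Real

theorem integral_sin_sq_primitive_sin (θ₀ : ℝ → ℝ) (hc : Continuous θ₀)
    (h1 : ∀ s ∈ Icc (-1 : ℝ) 1, θ₀ s = -θ₀ (-s))
    (h2 : ∀ s ∈ Icc (-1 : ℝ) 0, θ₀ s = θ₀ (-1 - s))
    (h3 : ∀ s ∈ Icc (-(1 / 2) : ℝ) 0, θ₀ s = -θ₀ (-(1 / 2) - s)) :
    (∫ s in (-1 : ℝ)..1,
      sin (θ₀ s) ^ 2 * ∫ σ in (-1 : ℝ)..s, sin (θ₀ σ)) = 0 := by
  set f : ℝ → ℝ := fun s => sin (θ₀ s) with hfdef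
  have hfc : Continuous f := Real.continuous_sin.comp hc
  have hfi : ∀ a b : ℝ, IntervalIntegrable f MeasureTheory.volume a b :=
    fun a b => hfc.intervalIntegrable a b
  have hFc : Continuous fun s => ∫ σ in (-1:ℝ)..s, f σ :=
    intervalIntegral.continuous_primitive hfi (-1)
  set g : ℝ → ℝ := fun s => f s ^ 2 * ∫ σ in (-1:ℝ)..s, f σ with hgdef
  have hgc : Continuous g := (hfc.pow 2).mul hFc
  have hgi : ∀ a b : ℝ, IntervalIntegrable g MeasureTheory.volume a b :=
    fun a b => hgc.intervalIntegrable a b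
  -- pointwise identities
  have hodd : ∀ s ∈ Icc (-1:ℝ) 1, f (-s) = -f s := by
    intro s hs
    have h := h1 s hs
    simp only [hfdef, h]
    simp
  have hq : ∀ s ∈ Icc (0:ℝ) (1/2), f (1/2 - s) = -f s := by
    intro s hs
    obtain ⟨hs0, hs1⟩ := hs
    have e1 : θ₀ s = -θ₀ (-s) := h1 s ⟨by linarith, by linarith⟩
    have e2 : θ₀ (-s) = -θ₀ (-(1/2) - -s) := h3 (-s) ⟨by linarith, by linarith⟩
    have e3 : θ₀ (-(1/2) - -s) = -θ₀ (-(-(1/2) - -s)) :=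
      h1 _ ⟨by linarith, by linarith⟩
    rw [show -(-(1/2:ℝ) - -s) = 1/2 - s by ring] at e3
    have key : θ₀ (1/2 - s) = -θ₀ s := by linarith [e1, e2, e3]
    simp only [hfdef, key]
    simp
  have hsh : ∀ t ∈ Icc (0:ℝ) (1/2), f (t + 1/2) = -f t := by
    intro t ht
    obtain ⟨ht0, ht1⟩ := ht
    have e1 : θ₀ (t + 1/2) = -θ₀ (-(t + 1/2)) :=
      h1 _ ⟨by linarith, by linarith⟩
    have e2 : θ₀ (-(t + 1/2)) = θ₀ (-1 - -(t + 1/2)) :=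
      h2 _ ⟨by linarith, by linarith⟩
    rw [show (-1 : ℝ) - -(t + 1/2) = t - 1/2 by ring] at e2
    have e3 : θ₀ (t - 1/2) = -θ₀ (-(1/2) - (t - 1/2)) :=
      h3 _ ⟨by linarith, by linarith⟩
    rw [show -(1/2:ℝ) - (t - 1/2) = -t by ring] at e3
    have e4 : θ₀ (-t) = -θ₀ (- -t) := h1 _ ⟨by linarith, by linarith⟩
    rw [neg_neg] at e4
    have key : θ₀ (t + 1/2) = -θ₀ t := by linarith [e1, e2, e3, e4]
    simp only [hfdef, key]
    simp
  -- base integral facts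
  have I0 : (∫ σ in (0:ℝ)..(1/2:ℝ), f σ) = 0 := by
    have hsub : (∫ σ in (0:ℝ)..(1/2:ℝ), f (1/2 - σ)) = ∫ σ in (0:ℝ)..(1/2:ℝ), f σ := by
      rw [intervalIntegral.integral_comp_sub_left f (1/2)]
      norm_num
    have hcongr : (∫ σ in (0:ℝ)..(1/2:ℝ), f (1/2 - σ))
        = ∫ σ in (0:ℝ)..(1/2:ℝ), (-f σ) := by
      apply intervalIntegral.integral_congr
      intro x hx
      rw [uIcc_of_le (by norm_num : (0:ℝ) ≤ 1/2)] at hx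
      exact hq x hx
    rw [intervalIntegral.integral_neg] at hcongr
    linarith
  have Ihalf : (∫ σ in (1/2:ℝ)..1, f σ) = 0 := by
    have hsub : (∫ σ in (0:ℝ)..(1/2:ℝ), f (σ + 1/2)) = ∫ σ in (1/2:ℝ)..1, f σ := by
      rw [intervalIntegral.integral_comp_add_right f (1/2)]
      norm_num
    have hcongr : (∫ σ in (0:ℝ)..(1/2:ℝ), f (σ + 1/2))
        = ∫ σ in (0:ℝ)..(1/2:ℝ), (-f σ) := by
      apply intervalIntegral.integral_congr
      intro x hx
      rw [uIcc_of_le (by norm_num : (0:ℝ) ≤ 1/2)] at hx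
      exact hsh x hx
    rw [intervalIntegral.integral_neg, I0] at hcongr
    rw [← hsub, hcongr]
    ring
  have I01 : (∫ σ in (0:ℝ)..1, f σ) = 0 := by
    rw [← intervalIntegral.integral_add_adjacent_intervals (hfi 0 (1/2)) (hfi (1/2) 1),
      I0, Ihalf]
    ring
  have Ineg : (∫ σ in (-1:ℝ)..0, f σ) = 0 := by
    have hsub : (∫ σ in (0:ℝ)..1, f (-σ)) = ∫ σ in (-1:ℝ)..0, f σ := by
      rw [intervalIntegral.integral_comp_neg f]
      norm_num
    have hcongr : (∫ σ in (0:ℝ)..1, f (-σ)) = ∫ σ in (0:ℝ)..1, (-f σ) := by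
      apply intervalIntegral.integral_congr
      intro x hx
      rw [uIcc_of_le (by norm_num : (0:ℝ) ≤ 1)] at hx
      exact hodd x ⟨by linarith [hx.1], hx.2⟩
    rw [intervalIntegral.integral_neg, I01] at hcongr
    rw [← hsub, hcongr]
    ring
  have Itot : (∫ σ in (-1:ℝ)..1, f σ) = 0 := by
    rw [← intervalIntegral.integral_add_adjacent_intervals (hfi (-1) 0) (hfi 0 1),
      Ineg, I01]
    ring
  -- the primitive F is even on [-1,1]
  have Feven : ∀ x ∈ Icc (0:ℝ) 1,
      (∫ σ in (-1:ℝ)..(-x), f σ) = ∫ σ in (-1:ℝ)..x, f σ := by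
    intro x hx
    have hsub : (∫ σ in x..1, f (-σ)) = ∫ σ in (-1:ℝ)..(-x), f σ := by
      rw [intervalIntegral.integral_comp_neg f]
    have hcongr : (∫ σ in x..1, f (-σ)) = ∫ σ in x..1, (-f σ) := by
      apply intervalIntegral.integral_congr
      intro u hu
      rw [uIcc_of_le hx.2] at hu
      exact hodd u ⟨by linarith [hu.1, hx.1], hu.2⟩
    have hadd : (∫ σ in (-1:ℝ)..x, f σ) + (∫ σ in x..1, f σ) = ∫ σ in (-1:ℝ)..1, f σ :=
      intervalIntegral.integral_add_adjacent_intervals (hfi (-1) x) (hfi x 1)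
    rw [intervalIntegral.integral_neg] at hcongr
    rw [← hsub, hcongr]
    rw [Itot] at hadd
    linarith
  -- shift identity for the primitive
  have Fshift : ∀ t ∈ Icc (0:ℝ) (1/2),
      (∫ σ in (-1:ℝ)..(t + 1/2), f σ) = -∫ σ in (-1:ℝ)..t, f σ := by
    intro t ht
    have hA : (∫ σ in (-1:ℝ)..(1/2:ℝ), f σ) = 0 := by
      rw [← intervalIntegral.integral_add_adjacent_intervals (hfi (-1) 0) (hfi 0 (1/2)),
        Ineg, I0]
      ring
    have hsub : (∫ σ in (0:ℝ)..t, f (σ + 1/2)) = ∫ σ in (1/2:ℝ)..(t + 1/2), f σ := by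
      rw [intervalIntegral.integral_comp_add_right f (1/2)]
      norm_num
    have hcongr : (∫ σ in (0:ℝ)..t, f (σ + 1/2)) = ∫ σ in (0:ℝ)..t, (-f σ) := by
      apply intervalIntegral.integral_congr
      intro u hu
      rw [uIcc_of_le ht.1] at hu
      exact hsh u ⟨hu.1, by linarith [hu.2, ht.2]⟩
    rw [intervalIntegral.integral_neg] at hcongr
    have hadd1 : (∫ σ in (-1:ℝ)..(1/2:ℝ), f σ) + (∫ σ in (1/2:ℝ)..(t + 1/2), f σ)
        = ∫ σ in (-1:ℝ)..(t + 1/2), f σ :=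
      intervalIntegral.integral_add_adjacent_intervals (hfi (-1) (1/2)) (hfi (1/2) (t + 1/2))
    have hadd2 : (∫ σ in (-1:ℝ)..(0:ℝ), f σ) + (∫ σ in (0:ℝ)..t, f σ)
        = ∫ σ in (-1:ℝ)..t, f σ :=
      intervalIntegral.integral_add_adjacent_intervals (hfi (-1) 0) (hfi 0 t)
    rw [hA] at hadd1
    rw [Ineg] at hadd2
    rw [← hadd1, ← hsub, hcongr]
    linarith
  -- evenness of g
  have E1 : (∫ s in (-1:ℝ)..0, g s) = ∫ s in (0:ℝ)..1, g s := by
    have hsub : (∫ s in (0:ℝ)..1, g (-s)) = ∫ s in (-1:ℝ)..0, g s := by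
      rw [intervalIntegral.integral_comp_neg g]
      norm_num
    have hcongr : (∫ s in (0:ℝ)..1, g (-s)) = ∫ s in (0:ℝ)..1, g s := by
      apply intervalIntegral.integral_congr
      intro x hx
      rw [uIcc_of_le (by norm_num : (0:ℝ) ≤ 1)] at hx
      have h1' : f (-x) = -f x := hodd x ⟨by linarith [hx.1], hx.2⟩
      simp only [hgdef]
      rw [h1', Feven x hx]
      ring
    rw [← hsub, hcongr]
  -- anti-symmetry of g under half-shift
  have E2 : (∫ s in (1/2:ℝ)..1, g s) = -∫ s in (0:ℝ)..(1/2:ℝ), g s := by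
    have hsub : (∫ s in (0:ℝ)..(1/2:ℝ), g (s + 1/2)) = ∫ s in (1/2:ℝ)..1, g s := by
      rw [intervalIntegral.integral_comp_add_right g (1/2)]
      norm_num
    have hcongr : (∫ s in (0:ℝ)..(1/2:ℝ), g (s + 1/2))
        = ∫ s in (0:ℝ)..(1/2:ℝ), (-g s) := by
      apply intervalIntegral.integral_congr
      intro x hx
      rw [uIcc_of_le (by norm_num : (0:ℝ) ≤ 1/2)] at hx
      have h1' : f (x + 1/2) = -f x := hsh x hx
      simp only [hgdef]
      rw [h1', Fshift x hx]
      ring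
    rw [intervalIntegral.integral_neg] at hcongr
    rw [← hsub, hcongr]
  -- conclude
  have E3 : (∫ s in (0:ℝ)..1, g s) = 0 := by
    rw [← intervalIntegral.integral_add_adjacent_intervals (hgi 0 (1/2)) (hgi (1/2) 1), E2]
    ring
  show (∫ s in (-1:ℝ)..1, g s) = 0
  rw [← intervalIntegral.integral_add_adjacent_intervals (hgi (-1) 0) (hgi 0 1), E1, E3]
  ring
end

section
/- Let ρ > 0 and let ξ : [0, (π/2)ρ] → ℝ² be of class C¹ with a Lipschitz derivative, with |ξ'(s)| = 1 for all s and |ξ''(s)| ≤ 1/ρ for a.e. s. Assume ξ(0) = 0 and ξ'(0) = (1,0). Then the first component satisfies ξ₁(s) ≥ ρ · sin(s/ρ) for every s ∈ [0, (π/2)ρ]. -/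
open Set Real MeasureTheory Filter intervalIntegral RealInnerProductSpace

section Master

variable {E : Type*} [NormedAddCommGroup E] [NormedSpace ℝ E] [CompleteSpace E]

omit [CompleteSpace E] in
lemma slope_seq_lim {f : ℝ → E} {x : ℝ} {D : E} (hder : HasDerivAt f D x)
    {u : ℕ → ℝ} (hu : ∀ n, u n ≠ 0) (hu0 : Filter.Tendsto u atTop (nhds 0)) :
    Filter.Tendsto (fun n => (u n)⁻¹ • (f (x + u n) - f x)) atTop (nhds D) := by
  have h1 : Filter.Tendsto (fun n => x + u n) atTop (nhdsWithin x {x}ᶜ) := by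
    refine tendsto_nhdsWithin_of_tendsto_nhds_of_eventually_within _ ?_ ?_
    · have : Filter.Tendsto (fun n => x + u n) atTop (nhds (x + 0)) :=
        tendsto_const_nhds.add hu0
      simpa using this
    · exact Filter.Eventually.of_forall fun n => by simp [hu n]
  have h2 := (hasDerivAt_iff_tendsto_slope.mp hder).comp h1
  have h3 : (slope f x ∘ fun n => x + u n) = fun n => (u n)⁻¹ • (f (x + u n) - f x) := by
    funext n
    simp [Function.comp, slope_def_module]
  rwa [h3] at h2

lemma lipschitz_ae_ftc {G g' : ℝ → E} {K : NNReal} {a b : ℝ} (hab : a ≤ b)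
    (hlip : LipschitzWith K G)
    (hae : ∀ᵐ t ∂volume, t ∈ Ioo a b → HasDerivAt G (g' t) t) :
    IntegrableOn g' (Ioc a b) volume ∧ G b - G a = ∫ t in Ioc a b, g' t := by
  rcases eq_or_lt_of_le hab with rfl | hab
  · simp
  have hG : Continuous G := hlip.continuous
  have hGi : ∀ c d : ℝ, IntervalIntegrable G volume c d := fun c d => hG.intervalIntegrable c d
  set u : ℕ → ℝ := fun n => ((n : ℝ) + 1)⁻¹ with hu_def
  have hupos : ∀ n, 0 < u n := fun n => by positivity
  have hune : ∀ n, u n ≠ 0 := fun n => (hupos n).ne'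
  have hu0 : Filter.Tendsto u atTop (nhds 0) := by
    simpa [hu_def, one_div] using tendsto_one_div_add_atTop_nhds_zero_nat (𝕜 := ℝ)
  set F : ℕ → ℝ → E := fun n t => (u n)⁻¹ • (G (t + u n) - G t) with hF_def
  have hFc : ∀ n, Continuous (F n) := fun n =>
    ((hG.comp (continuous_id.add continuous_const)).sub hG).const_smul _
  have hmeas : ∀ n, AEStronglyMeasurable (F n) (volume.restrict (Ioc a b)) := fun n =>
    (hFc n).aestronglyMeasurable
  have hbound : ∀ n, ∀ᵐ t ∂volume.restrict (Ioc a b), ‖F n t‖ ≤ (K : ℝ) := by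
    intro n
    refine Filter.Eventually.of_forall fun t => ?_
    have h1 : ‖G (t + u n) - G t‖ ≤ (K : ℝ) * u n := by
      have h2 := hlip.dist_le_mul (t + u n) t
      rw [dist_eq_norm, dist_eq_norm] at h2
      simpa [abs_of_pos (hupos n)] using h2
    have h3 : ‖F n t‖ = (u n)⁻¹ * ‖G (t + u n) - G t‖ := by
      rw [hF_def]
      simp [norm_smul, abs_of_pos (hupos n)]
    rw [h3]
    calc (u n)⁻¹ * ‖G (t + u n) - G t‖ ≤ (u n)⁻¹ * ((K : ℝ) * u n) :=
          mul_le_mul_of_nonneg_left h1 (by positivity)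
      _ = (K : ℝ) := by rw [mul_comm (K : ℝ), ← mul_assoc, inv_mul_cancel₀ (hune n), one_mul]
  have hbint : Integrable (fun _ : ℝ => (K : ℝ)) (volume.restrict (Ioc a b)) := by
    rw [integrable_const_iff]
    right
    exact ⟨by rw [Measure.restrict_apply_univ]; exact measure_Ioc_lt_top⟩
  have haeb : ∀ᵐ t ∂volume.restrict (Ioc a b), t ≠ b := by
    rw [ae_iff]
    have h1 : {t : ℝ | ¬t ≠ b} = {b} := by ext t; simp
    rw [h1]
    have h2 : volume.restrict (Ioc a b) {b} ≤ volume {b} :=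
      Measure.le_iff'.mp Measure.restrict_le_self {b}
    simpa [Real.volume_singleton] using le_antisymm h2 (zero_le _)
  have haelim : ∀ᵐ t ∂volume.restrict (Ioc a b),
      Filter.Tendsto (fun n => F n t) atTop (nhds (g' t)) := by
    filter_upwards [ae_restrict_of_ae hae, haeb, ae_restrict_mem measurableSet_Ioc]
      with t h1 h2 h3
    exact slope_seq_lim (h1 ⟨h3.1, lt_of_le_of_ne h3.2 h2⟩) hune hu0
  have hint : Integrable g' (volume.restrict (Ioc a b)) :=
    ⟨aestronglyMeasurable_of_tendsto_ae atTop hmeas haelim,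
     hasFiniteIntegral_of_dominated_convergence hbint.hasFiniteIntegral hbound haelim⟩
  have htendI : Filter.Tendsto (fun n => ∫ t in Ioc a b, F n t) atTop
      (nhds (∫ t in Ioc a b, g' t)) :=
    tendsto_integral_of_dominated_convergence _ hmeas hbint hbound haelim
  set Φ : ℝ → E := fun y => ∫ t in a..y, G t with hΦ_def
  have hsm : StronglyMeasurableAtFilter G (nhds a) volume :=
    ⟨univ, univ_mem, hG.aestronglyMeasurable.restrict⟩
  have hsmb : StronglyMeasurableAtFilter G (nhds b) volume :=
    ⟨univ, univ_mem, hG.aestronglyMeasurable.restrict⟩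
  have hΦa : HasDerivAt Φ (G a) a := integral_hasDerivAt_right (hGi a a) hsm hG.continuousAt
  have hΦb : HasDerivAt Φ (G b) b := integral_hasDerivAt_right (hGi a b) hsmb hG.continuousAt
  have hkey : ∀ n, ∫ t in Ioc a b, F n t =
      (u n)⁻¹ • (Φ (b + u n) - Φ b) - (u n)⁻¹ • (Φ (a + u n) - Φ a) := by
    intro n
    have e0 : ∫ t in Ioc a b, F n t = (u n)⁻¹ • ∫ t in Ioc a b, (G (t + u n) - G t) := by
      rw [hF_def]
      exact integral_smul _ _
    have e1 : ∫ t in Ioc a b, (G (t + u n) - G t) = ∫ t in a..b, (G (t + u n) - G t) :=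
      (intervalIntegral.integral_of_le hab.le).symm
    have e2 : ∫ t in a..b, (G (t + u n) - G t)
        = (∫ t in a..b, G (t + u n)) - ∫ t in a..b, G t :=
      intervalIntegral.integral_sub
        ((hG.comp (continuous_id.add continuous_const)).intervalIntegrable _ _) (hGi a b)
    have e3 : ∫ t in a..b, G (t + u n) = ∫ t in (a + u n)..(b + u n), G t :=
      intervalIntegral.integral_comp_add_right _ _
    have e4 : ∫ t in (a + u n)..(b + u n), G t = Φ (b + u n) - Φ (a + u n) :=
      (integral_interval_sub_left (hGi a _) (hGi a _)).symm
    have e6 : Φ a = 0 := intervalIntegral.integral_same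
    rw [e0, e1, e2, e3, e4]
    rw [← smul_sub]
    congr 1
    rw [e6]
    show Φ (b + u n) - Φ (a + u n) - Φ b = Φ (b + u n) - Φ b - (Φ (a + u n) - 0)
    abel
  have htendD : Filter.Tendsto (fun n => ∫ t in Ioc a b, F n t) atTop (nhds (G b - G a)) := by
    have h1 := (slope_seq_lim hΦb hune hu0).sub (slope_seq_lim hΦa hune hu0)
    exact h1.congr fun n => (hkey n).symm
  exact ⟨hint, tendsto_nhds_unique htendD htendI⟩

end Master

set_option maxHeartbeats 2000000 in
/-- Lemma on curves with curvature bounded by `1/ρ` starting horizontally at the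
origin: the first component dominates `ρ sin(s/ρ)` on `[0, (π/2)ρ]`. -/
theorem first_component_lower_bound (ρ : ℝ) (hρ : 0 < ρ)
    (ξ ξ' ξ'' : ℝ → EuclideanSpace ℝ (Fin 2)) (K : NNReal)
    (hd : ∀ s ∈ Icc 0 (π / 2 * ρ), HasDerivWithinAt ξ (ξ' s) (Icc 0 (π / 2 * ρ)) s)
    (hlip : LipschitzOnWith K ξ' (Icc 0 (π / 2 * ρ)))
    (hdd : ∀ᵐ s ∂volume, s ∈ Icc 0 (π / 2 * ρ) →
      HasDerivWithinAt ξ' (ξ'' s) (Icc 0 (π / 2 * ρ)) s ∧ ‖ξ'' s‖ ≤ 1 / ρ)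
    (hunit : ∀ s ∈ Icc 0 (π / 2 * ρ), ‖ξ' s‖ = 1)
    (h0 : ξ 0 = 0) (h0' : ξ' 0 = (WithLp.equiv 2 _).symm ![1, 0]) :
    ∀ s ∈ Icc 0 (π / 2 * ρ), ρ * sin (s / ρ) ≤ ξ s 0 := by
  have hπ : (0 : ℝ) < π := Real.pi_pos
  set L : ℝ := π / 2 * ρ with hL_def
  have hLpos : 0 < L := by positivity
  have hL0 : (0 : ℝ) ≤ L := hLpos.le
  -- the vector e₁ and its basic properties
  set e : EuclideanSpace ℝ (Fin 2) := (WithLp.equiv 2 _).symm ![1, 0] with he_def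
  have he_apply : ∀ x : EuclideanSpace ℝ (Fin 2), ⟪x, e⟫ = x 0 := by
    intro x
    simp [he_def, PiLp.inner_apply, Fin.sum_univ_two, PiLp.toLp_apply]
  have he_norm : ‖e‖ = 1 := by
    rw [he_def, EuclideanSpace.norm_eq]
    simp [Fin.sum_univ_two, PiLp.toLp_apply]
  have he0 : e 0 = 1 := by
    rw [he_def]
    simp [PiLp.toLp_apply]
  -- the clamped derivative
  set G : ℝ → EuclideanSpace ℝ (Fin 2) := fun t => ξ' ((projIcc 0 L hL0 t : Icc (0:ℝ) L) : ℝ)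
    with hG_def
  have hGlip : LipschitzWith K G := by
    have h1 := (lipschitzOnWith_iff_restrict.mp hlip).comp (LipschitzWith.projIcc hL0)
    rw [mul_one] at h1
    exact h1
  have hGeq : ∀ t ∈ Icc 0 L, G t = ξ' t := by
    intro t ht
    rw [hG_def]
    simp [projIcc_of_mem hL0 ht]
  -- a.e. properties of the second derivative
  have hae_main : ∀ᵐ t ∂volume, t ∈ Ioo 0 L →
      HasDerivAt G (ξ'' t) t ∧ ‖ξ'' t‖ ≤ 1 / ρ ∧ ⟪ξ'' t, ξ' t⟫ = 0 := by
    filter_upwards [hdd] with t hdd_t ht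
    have htIcc : t ∈ Icc 0 L := Ioo_subset_Icc_self ht
    obtain ⟨hder, hbnd⟩ := hdd_t htIcc
    have hnhds : Icc 0 L ∈ nhds t := Icc_mem_nhds ht.1 ht.2
    have hderAt : HasDerivAt ξ' (ξ'' t) t := hder.hasDerivAt hnhds
    have hGeq_ev : G =ᶠ[nhds t] ξ' := by
      filter_upwards [hnhds] with x hx using hGeq x hx
    have hGder : HasDerivAt G (ξ'' t) t := hderAt.congr_of_eventuallyEq hGeq_ev
    refine ⟨hGder, hbnd, ?_⟩
    have hconst : (fun y => ⟪ξ' y, ξ' y⟫) =ᶠ[nhds t] fun _ => (1 : ℝ) := by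
      filter_upwards [hnhds] with x hx
      rw [real_inner_self_eq_norm_mul_norm, hunit x hx, mul_one]
    have hd1 : HasDerivAt (fun y => ⟪ξ' y, ξ' y⟫) (⟪ξ' t, ξ'' t⟫ + ⟪ξ'' t, ξ' t⟫) t :=
      hderAt.inner ℝ hderAt
    have hd2 : HasDerivAt (fun y => ⟪ξ' y, ξ' y⟫) 0 t :=
      (hasDerivAt_const t (1 : ℝ)).congr_of_eventuallyEq hconst
    have huniq := hd1.unique hd2
    have hsymm : ⟪ξ' t, ξ'' t⟫ = ⟪ξ'' t, ξ' t⟫ := real_inner_comm _ _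
    linarith
  -- the key strict bound for shifted cosines
  have hkey : ∀ ε : ℝ, 0 < ε → ε < L → ∀ x ∈ Icc 0 (L - ε), cos ((x + ε) / ρ) < ξ' x 0 := by
    intro ε hε hεL
    set T : ℝ := L - ε with hT_def
    have hT0 : 0 ≤ T := by
      rw [hT_def]; linarith
    set ψ : ℝ → ℝ := fun y => G y 0 - cos ((y + ε) / ρ) with hψ_def
    have hψc : Continuous ψ := by
      rw [hψ_def]
      exact ((EuclideanSpace.proj (0 : Fin 2)).continuous.comp hGlip.continuous).sub
        (Real.continuous_cos.comp ((continuous_id.add continuous_const).div_const ρ))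
    have hψpos : ∀ x ∈ Icc 0 T, 0 < ψ x := by
      by_contra hcon
      push_neg at hcon
      obtain ⟨x₀, hx₀, hψx₀⟩ := hcon
      set Z : Set ℝ := Icc 0 T ∩ ψ ⁻¹' (Iic 0) with hZ_def
      have hZne : Z.Nonempty := ⟨x₀, hx₀, hψx₀⟩
      have hZclosed : IsClosed Z := isClosed_Icc.inter (isClosed_Iic.preimage hψc)
      have hZbdd : BddBelow Z := ⟨0, fun y hy => hy.1.1⟩
      set m := sInf Z with hm_def
      have hmZ : m ∈ Z := hZclosed.csInf_mem hZne hZbdd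
      have hm0 : 0 ≤ m := hmZ.1.1
      have hmT : m ≤ T := hmZ.1.2
      have hmL : m < L := lt_of_le_of_lt hmT (by rw [hT_def]; linarith)
      have hψm : ψ m ≤ 0 := hmZ.2
      have hψ0 : 0 < ψ 0 := by
        have hG0 : G 0 = ξ' 0 := hGeq 0 ⟨le_refl 0, hL0⟩
        have hG00 : G 0 0 = 1 := by rw [hG0, h0']; exact he0
        have hcos1 : cos (ε / ρ) < 1 := by
          have h1 : 0 < ε / ρ := by positivity
          have h2 : ε / ρ ≤ π := by
            rw [div_le_iff₀ hρ]
            nlinarith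
          have h3 := Real.strictAntiOn_cos (Set.mem_Icc.mpr ⟨le_refl 0, hπ.le⟩)
            (Set.mem_Icc.mpr ⟨h1.le, h2⟩) h1
          rwa [Real.cos_zero] at h3
        have : ψ 0 = 1 - cos (ε / ρ) := by
          rw [hψ_def]
          simp [hG00]
        rw [this]
        linarith
      have hmpos : 0 < m := by
        rcases hm0.lt_or_eq with h | h
        · exact h
        · exfalso; rw [← h] at hψm; linarith
      have hpos_lt : ∀ y, 0 ≤ y → y < m → 0 < ψ y := by
        intro y hy0 hym
        by_contra h'
        push_neg at h'
        have hyZ : y ∈ Z := ⟨⟨hy0, le_trans hym.le hmT⟩, h'⟩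
        exact absurd (csInf_le hZbdd hyZ) (not_le.2 hym)
      -- FTC on [0, m]
      have haeG : ∀ᵐ t ∂volume, t ∈ Ioo 0 m → HasDerivAt G (ξ'' t) t := by
        filter_upwards [hae_main] with t h1 ht
        exact (h1 ⟨ht.1, lt_of_lt_of_le ht.2 (le_of_lt hmL)⟩).1
      obtain ⟨hint, heq⟩ := lipschitz_ae_ftc hmpos.le hGlip haeG
      -- push to coordinates
      have hcoord : G m 0 - G 0 0 = ∫ t in Ioc 0 m, ξ'' t 0 := by
        have h1 := ContinuousLinearMap.integral_comp_comm (EuclideanSpace.proj (0 : Fin 2)) hint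
        have h2 : (EuclideanSpace.proj (0 : Fin 2)) (G m - G 0) =
            ∫ t in Ioc 0 m, (EuclideanSpace.proj (0 : Fin 2)) (ξ'' t) := by
          rw [heq]; exact h1.symm
        simpa [PiLp.proj_apply, PiLp.sub_apply] using h2
      -- FTC for the cosine part
      have hcosFTC : cos ((m + ε) / ρ) - cos ((0 + ε) / ρ)
          = ∫ t in Ioc 0 m, (-(sin ((t + ε) / ρ)) * (1 / ρ)) := by
        have hder : ∀ y ∈ uIcc (0 : ℝ) m,
            HasDerivAt (fun z => cos ((z + ε) / ρ)) (-(sin ((y + ε) / ρ)) * (1 / ρ)) y := by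
          intro y _
          have ha : HasDerivAt (fun z : ℝ => (z + ε) / ρ) (1 / ρ) y := by
            simpa using ((hasDerivAt_id y).add_const ε).div_const ρ
          exact (Real.hasDerivAt_cos ((y + ε) / ρ)).comp y ha
        have hintc : IntervalIntegrable (fun y => -(sin ((y + ε) / ρ)) * (1 / ρ)) volume 0 m :=
          (((Real.continuous_sin.comp ((continuous_id.add continuous_const).div_const
            ρ)).neg).mul continuous_const).intervalIntegrable _ _
        have h1 := intervalIntegral.integral_eq_sub_of_hasDerivAt hder hintc
        rw [intervalIntegral.integral_of_le hmpos.le] at h1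
        rw [← h1]
      -- the integrand is a.e. nonnegative
      have hnn : 0 ≤ ∫ t in Ioc 0 m, (ξ'' t 0 + sin ((t + ε) / ρ) * (1 / ρ)) := by
        apply MeasureTheory.integral_nonneg_of_ae
        have haem : ∀ᵐ t ∂volume.restrict (Ioc 0 m), t ≠ m := by
          rw [ae_iff]
          have h1 : {t : ℝ | ¬t ≠ m} = {m} := by ext t; simp
          rw [h1]
          have h2 : volume.restrict (Ioc 0 m) {m} ≤ volume {m} :=
            Measure.le_iff'.mp Measure.restrict_le_self {m}
          simpa [Real.volume_singleton] using le_antisymm h2 (zero_le _)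
        filter_upwards [ae_restrict_of_ae hae_main, haem, ae_restrict_mem measurableSet_Ioc]
          with t h1 h2 h3
        simp only [Pi.zero_apply]
        have htm : t ∈ Ioo 0 m := ⟨h3.1, lt_of_le_of_ne h3.2 h2⟩
        have htL : t ∈ Ioo 0 L := ⟨htm.1, lt_trans htm.2 hmL⟩
        obtain ⟨hGd, hb, hO⟩ := h1 htL
        have htIcc : t ∈ Icc 0 L := Ioo_subset_Icc_self htL
        have hGt : G t = ξ' t := hGeq t htIcc
        set θ : ℝ := (t + ε) / ρ with hθ_def
        have hθ0 : 0 ≤ θ := by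
          rw [hθ_def]
          have ht0 : 0 < t := htm.1
          positivity
        have hθhalf : θ ≤ π / 2 := by
          rw [hθ_def, div_le_iff₀ hρ]
          have : t + ε ≤ T + ε := by linarith [htm.2, hmT]
          rw [hT_def] at this
          linarith
        have hθπ : θ ≤ π := by linarith
        have hcosθ : 0 ≤ cos θ := Real.cos_nonneg_of_mem_Icc ⟨by linarith, hθhalf⟩
        have hsinθ : 0 ≤ sin θ := Real.sin_nonneg_of_nonneg_of_le_pi hθ0 hθπ
        have hft : cos θ < ξ' t 0 := by
          have h4 := hpos_lt t htm.1.le htm.2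
          rw [hψ_def] at h4
          simp only at h4
          rw [hGt] at h4
          rw [hθ_def]
          linarith
        set c : ℝ := ξ' t 0 with hc_def
        have hc_inner : ⟪ξ' t, e⟫ = c := he_apply _
        have hcoord' : ⟪ξ'' t, e⟫ = ξ'' t 0 := he_apply _
        have hw : ‖e - c • ξ' t‖ ^ 2 = 1 - c ^ 2 := by
          rw [norm_sub_sq_real, real_inner_smul_right, real_inner_comm, hc_inner, norm_smul,
            hunit t htIcc, he_norm]
          simp [abs_sq]
          ring
        have hwnorm : ‖e - c • ξ' t‖ = Real.sqrt (1 - c ^ 2) := by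
          rw [← hw]
          exact (Real.sqrt_sq (norm_nonneg _)).symm
        have hsqrt : Real.sqrt (1 - c ^ 2) ≤ sin θ := by
          have h5 : cos θ ^ 2 ≤ c ^ 2 := by nlinarith [hft.le, hcosθ]
          have h6 : 1 - c ^ 2 ≤ sin θ ^ 2 := by nlinarith [Real.sin_sq_add_cos_sq θ]
          calc Real.sqrt (1 - c ^ 2) ≤ Real.sqrt (sin θ ^ 2) := Real.sqrt_le_sqrt h6
            _ = sin θ := by rw [Real.sqrt_sq hsinθ]
        have hexp : ⟪ξ'' t, e⟫ = ⟪ξ'' t, e - c • ξ' t⟫ := by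
          rw [inner_sub_right, real_inner_smul_right, hO]
          ring
        have habs := abs_real_inner_le_norm (ξ'' t) (e - c • ξ' t)
        have hbb : ‖ξ'' t‖ * ‖e - c • ξ' t‖ ≤ (1 / ρ) * sin θ := by
          apply mul_le_mul hb (hwnorm ▸ hsqrt) (norm_nonneg _) (by positivity)
        have hinner : -((1 / ρ) * sin θ) ≤ ⟪ξ'' t, e⟫ := by
          rw [hexp]
          calc -((1 / ρ) * sin θ) ≤ -(‖ξ'' t‖ * ‖e - c • ξ' t‖) := neg_le_neg hbb
            _ ≤ -|⟪ξ'' t, e - c • ξ' t⟫| := neg_le_neg habs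
            _ ≤ ⟪ξ'' t, e - c • ξ' t⟫ := neg_abs_le _
        rw [hcoord'] at hinner
        have : sin ((t + ε) / ρ) = sin θ := by rw [hθ_def]
        rw [this]
        linarith [hinner, mul_comm (sin θ) (1 / ρ)]
      -- combine to get the contradiction
      have hintc2 : IntegrableOn (fun t => sin ((t + ε) / ρ) * (1 / ρ)) (Ioc 0 m) volume :=
        ((Real.continuous_sin.comp ((continuous_id.add continuous_const).div_const
          ρ)).mul continuous_const).integrableOn_Ioc
      have hintc1 : IntegrableOn (fun t => ξ'' t 0) (Ioc 0 m) volume := by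
        have h1 := (EuclideanSpace.proj (0 : Fin 2) :
          EuclideanSpace ℝ (Fin 2) →L[ℝ] ℝ).integrable_comp hint
        simpa [PiLp.proj_apply, IntegrableOn] using h1
      have hsplit : ∫ t in Ioc 0 m, (ξ'' t 0 + sin ((t + ε) / ρ) * (1 / ρ))
          = (∫ t in Ioc 0 m, ξ'' t 0) + ∫ t in Ioc 0 m, sin ((t + ε) / ρ) * (1 / ρ) :=
        MeasureTheory.integral_add hintc1 hintc2
      have hneg : ∫ t in Ioc 0 m, sin ((t + ε) / ρ) * (1 / ρ)
          = -(∫ t in Ioc 0 m, (-(sin ((t + ε) / ρ)) * (1 / ρ))) := by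
        rw [← MeasureTheory.integral_neg]
        congr 1
        funext t
        ring
      have hψdiff : ψ m - ψ 0 = ∫ t in Ioc 0 m, (ξ'' t 0 + sin ((t + ε) / ρ) * (1 / ρ)) := by
        rw [hsplit, ← hcoord, hneg, ← hcosFTC, hψ_def]
        simp only
        ring
      rw [← hψdiff] at hnn
      linarith
    -- conclude hkey
    intro x hx
    have h1 := hψpos x hx
    rw [hψ_def] at h1
    simp only at h1
    have hxL : x ∈ Icc 0 L := ⟨hx.1, by linarith [hx.2]⟩
    rw [hGeq x hxL] at h1
    linarith
  -- pointwise cosine bound on the open interval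
  have hcosle : ∀ x ∈ Ioo 0 L, cos (x / ρ) ≤ ξ' x 0 := by
    intro x hx
    have hcont : Filter.Tendsto (fun ε => cos ((x + ε) / ρ)) (nhdsWithin 0 (Ioi 0))
        (nhds (cos (x / ρ))) := by
      have h1 : Continuous fun ε : ℝ => cos ((x + ε) / ρ) :=
        Real.continuous_cos.comp ((continuous_const.add continuous_id).div_const ρ)
      have h2 := (h1.tendsto 0).mono_left
        (nhdsWithin_le_nhds : nhdsWithin (0:ℝ) (Ioi 0) ≤ nhds 0)
      simpa using h2
    refine le_of_tendsto hcont ?_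
    filter_upwards [Ioo_mem_nhdsGT_of_mem (Set.mem_Ico.mpr ⟨le_refl 0, sub_pos.2 hx.2⟩)]
      with ε hε
    have hεL : ε < L := lt_of_lt_of_le hε.2 (by linarith [hx.1])
    have hxT : x ∈ Icc 0 (L - ε) := ⟨hx.1.le, by linarith [hε.2]⟩
    exact (hkey ε hε.1 hεL x hxT).le
  -- the monotone comparison function
  set Fm : ℝ → ℝ := fun y => ξ y 0 - ρ * sin (y / ρ) with hFm_def
  have hFm' : ∀ x ∈ interior (Icc (0 : ℝ) L),
      HasDerivWithinAt Fm (ξ' x 0 - cos (x / ρ)) (interior (Icc (0 : ℝ) L)) x := by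
    rw [interior_Icc]
    intro x hx
    have h1 : HasDerivWithinAt ξ (ξ' x) (Ioo 0 L) x :=
      (hd x (Ioo_subset_Icc_self hx)).mono Ioo_subset_Icc_self
    have h2 : HasDerivWithinAt (fun y => ξ y 0) (ξ' x 0) (Ioo 0 L) x := by
      have h3 := (EuclideanSpace.proj (0 : Fin 2)).hasFDerivAt.comp_hasDerivWithinAt x h1
      exact h3
    have h4 : HasDerivAt (fun y : ℝ => ρ * sin (y / ρ)) (cos (x / ρ)) x := by
      have ha : HasDerivAt (fun y : ℝ => y / ρ) (1 / ρ) x := by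
        simpa using (hasDerivAt_id x).div_const ρ
      have hb := (Real.hasDerivAt_sin (x / ρ)).comp x ha
      have hc := hb.const_mul ρ
      have : ρ * (cos (x / ρ) * (1 / ρ)) = cos (x / ρ) := by
        field_simp
      rwa [this] at hc
    exact h2.sub h4.hasDerivWithinAt
  have hFmcont : ContinuousOn Fm (Icc 0 L) := by
    have h1 : ContinuousOn ξ (Icc 0 L) := fun x hx => (hd x hx).continuousWithinAt
    have h2 : ContinuousOn (fun y => ξ y 0) (Icc 0 L) :=
      (EuclideanSpace.proj (0 : Fin 2)).continuous.comp_continuousOn h1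
    exact h2.sub (continuous_const.mul
      (Real.continuous_sin.comp (continuous_id.div_const ρ))).continuousOn
  have hFm'nonneg : ∀ x ∈ interior (Icc (0 : ℝ) L), 0 ≤ ξ' x 0 - cos (x / ρ) := by
    rw [interior_Icc]
    intro x hx
    linarith [hcosle x hx]
  have hmono : MonotoneOn Fm (Icc 0 L) :=
    monotoneOn_of_hasDerivWithinAt_nonneg (convex_Icc 0 L) hFmcont hFm' hFm'nonneg
  intro s hs
  have h0mem : (0 : ℝ) ∈ Icc (0 : ℝ) L := ⟨le_refl 0, hL0⟩
  have h1 := hmono h0mem hs hs.1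
  have hFm0 : Fm 0 = 0 := by
    rw [hFm_def]
    simp [h0]
  rw [hFm0, hFm_def] at h1
  simp only at h1
  linarith
end

section
/- Let ξ ∈ C¹([0,L]; ℝ²) with |ξ'(s)| = 1 for all s. Suppose ξ satisfies: for every s ∈ [0,L], the two open disks B¹(s) = B_ρ(ξ(s) + ρ Jξ'(s)) and B²(s) = B_ρ(ξ(s) - ρ Jξ'(s)) contain no point ξ(σ) for σ ∈ [0,L], and there exist open half disks B⁻, B⁺ of radius 2ρ centered at ξ(0), ξ(L) with diameters normal to ξ'(0), ξ'(L), lying on the outward side, containing no point ξ(σ). Then ξ is injective on [0,L]. -/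
open Set Metric RealInnerProductSpace

/-- Counterclockwise rotation by `π/2` in the plane. -/
noncomputable def Jrot (v : EuclideanSpace ℝ (Fin 2)) : EuclideanSpace ℝ (Fin 2) :=
  (WithLp.equiv 2 (Fin 2 → ℝ)).symm ![-v 1, v 0]

lemma jrot_apply_zero (v : EuclideanSpace ℝ (Fin 2)) : Jrot v 0 = -(v 1) := by simp [Jrot]
lemma jrot_apply_one (v : EuclideanSpace ℝ (Fin 2)) : Jrot v 1 = v 0 := by simp [Jrot]

lemma inner2 (x y : EuclideanSpace ℝ (Fin 2)) : ⟪x, y⟫ = x 0 * y 0 + x 1 * y 1 := by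
  simp [PiLp.inner_apply, Fin.sum_univ_two]; ring

lemma norm_sq2 (x : EuclideanSpace ℝ (Fin 2)) : ‖x‖ ^ 2 = x 0 * x 0 + x 1 * x 1 := by
  rw [← real_inner_self_eq_norm_sq, inner2]

lemma inner_jrot_jrot (x y : EuclideanSpace ℝ (Fin 2)) : ⟪Jrot x, Jrot y⟫ = ⟪x, y⟫ := by
  rw [inner2, inner2, jrot_apply_zero, jrot_apply_zero, jrot_apply_one, jrot_apply_one]; ring

lemma norm_jrot (v : EuclideanSpace ℝ (Fin 2)) : ‖Jrot v‖ = ‖v‖ := by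
  have h1 : ‖Jrot v‖ ^ 2 = ‖v‖ ^ 2 := by
    rw [norm_sq2, norm_sq2, jrot_apply_zero, jrot_apply_one]; ring
  have := norm_nonneg (Jrot v); have := norm_nonneg v; nlinarith

lemma lagrange2 (u w : EuclideanSpace ℝ (Fin 2)) (hu : ‖u‖ = 1) :
    ⟪u, w⟫ ^ 2 + ⟪Jrot u, w⟫ ^ 2 = ‖w‖ ^ 2 := by
  have h1 : u 0 * u 0 + u 1 * u 1 = 1 := by rw [← norm_sq2, hu]; norm_num
  rw [inner2, inner2, jrot_apply_zero, jrot_apply_one, norm_sq2]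
  linear_combination (w 0 * w 0 + w 1 * w 1) * h1

lemma decomp2 (u w : EuclideanSpace ℝ (Fin 2)) (hu : ‖u‖ = 1) :
    w = ⟪u, w⟫ • u + ⟪Jrot u, w⟫ • Jrot u := by
  have h1 : u 0 * u 0 + u 1 * u 1 = 1 := by rw [← norm_sq2, hu]; norm_num
  have e0 : (⟪u, w⟫ • u + ⟪Jrot u, w⟫ • Jrot u) 0 = ⟪u, w⟫ * u 0 + ⟪Jrot u, w⟫ * Jrot u 0 := rfl
  have e1 : (⟪u, w⟫ • u + ⟪Jrot u, w⟫ • Jrot u) 1 = ⟪u, w⟫ * u 1 + ⟪Jrot u, w⟫ * Jrot u 1 := rfl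
  ext i
  fin_cases i
  · show w 0 = (⟪u, w⟫ • u + ⟪Jrot u, w⟫ • Jrot u) 0
    rw [e0]; simp only [inner2, jrot_apply_zero, jrot_apply_one]
    linear_combination (-(w 0)) * h1
  · show w 1 = (⟪u, w⟫ • u + ⟪Jrot u, w⟫ • Jrot u) 1
    rw [e1]; simp only [inner2, jrot_apply_zero, jrot_apply_one]
    linear_combination (-(w 1)) * h1

lemma arith1 (ρ w ip : ℝ) (hρ : 0 < ρ) (hw : 0 < w) (hip : 3/4 ≤ ip)
    (hA : 2 * ρ * (w * ip) ≤ w * w) (hle : w ≤ ρ/2) : False := by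
  nlinarith [mul_pos hρ hw]

lemma lemA (L ρ : ℝ) (hρ : 0 < ρ) (ξ ξ' : ℝ → EuclideanSpace ℝ (Fin 2))
    (hunit : ∀ s ∈ Icc 0 L, ‖ξ' s‖ = 1)
    (hdisks : ∀ s ∈ Icc 0 L, ∀ σ ∈ Icc 0 L,
      ξ σ ∉ ball (ξ s + ρ • Jrot (ξ' s)) ρ ∧ ξ σ ∉ ball (ξ s - ρ • Jrot (ξ' s)) ρ)
    {s σ : ℝ} (hs : s ∈ Icc 0 L) (hσ : σ ∈ Icc 0 L) :
    2 * ρ * |⟪Jrot (ξ' s), ξ σ - ξ s⟫| ≤ ‖ξ σ - ξ s‖ ^ 2 := by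
  obtain ⟨h1, h2⟩ := hdisks s hs σ hσ
  have hJ : ‖Jrot (ξ' s)‖ = 1 := by rw [norm_jrot]; exact hunit s hs
  rw [mem_ball, dist_eq_norm] at h1 h2
  push_neg at h1 h2
  have e1 : ξ σ - (ξ s + ρ • Jrot (ξ' s)) = (ξ σ - ξ s) - ρ • Jrot (ξ' s) := by abel
  have e2 : ξ σ - (ξ s - ρ • Jrot (ξ' s)) = (ξ σ - ξ s) - (-ρ) • Jrot (ξ' s) := by
    rw [neg_smul]; abel
  rw [e1] at h1; rw [e2] at h2
  have q1 : ρ ^ 2 ≤ ‖(ξ σ - ξ s) - ρ • Jrot (ξ' s)‖ ^ 2 := by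
    nlinarith [norm_nonneg ((ξ σ - ξ s) - ρ • Jrot (ξ' s))]
  have q2 : ρ ^ 2 ≤ ‖(ξ σ - ξ s) - (-ρ) • Jrot (ξ' s)‖ ^ 2 := by
    nlinarith [norm_nonneg ((ξ σ - ξ s) - (-ρ) • Jrot (ξ' s))]
  rw [norm_sub_sq_real] at q1 q2
  rw [real_inner_smul_right] at q1 q2
  rw [norm_smul, hJ] at q1 q2
  have hir : ⟪ξ σ - ξ s, Jrot (ξ' s)⟫ = ⟪Jrot (ξ' s), ξ σ - ξ s⟫ := real_inner_comm _ _
  rw [hir] at q1 q2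
  have haρ : |ρ| = ρ := abs_of_pos hρ
  have haρ' : |(-ρ)| = ρ := by rw [abs_neg]; exact haρ
  simp only [Real.norm_eq_abs, haρ, haρ'] at q1 q2
  rcases abs_cases ⟪Jrot (ξ' s), ξ σ - ξ s⟫ with ⟨h, _⟩ | ⟨h, _⟩ <;> rw [h] <;> nlinarith

lemma lemB (L ρ : ℝ) (hρ : 0 < ρ) (ξ ξ' : ℝ → EuclideanSpace ℝ (Fin 2))
    (hunit : ∀ s ∈ Icc 0 L, ‖ξ' s‖ = 1)
    (hdisks : ∀ s ∈ Icc 0 L, ∀ σ ∈ Icc 0 L,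
      ξ σ ∉ ball (ξ s + ρ • Jrot (ξ' s)) ρ ∧ ξ σ ∉ ball (ξ s - ρ • Jrot (ξ' s)) ρ)
    {s σ : ℝ} (hs : s ∈ Icc 0 L) (hσ : σ ∈ Icc 0 L)
    (hperp : ⟪ξ' s, ξ σ - ξ s⟫ = 0) (hlt : ‖ξ σ - ξ s‖ < 2 * ρ) : ξ σ = ξ s := by
  have hu : ‖ξ' s‖ = 1 := hunit s hs
  have hl := lagrange2 (ξ' s) (ξ σ - ξ s) hu
  rw [hperp] at hl
  have h0 : ⟪Jrot (ξ' s), ξ σ - ξ s⟫ ^ 2 = ‖ξ σ - ξ s‖ ^ 2 := by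
    rw [← hl]; ring
  have habs : |⟪Jrot (ξ' s), ξ σ - ξ s⟫| = ‖ξ σ - ξ s‖ := by
    calc |⟪Jrot (ξ' s), ξ σ - ξ s⟫| = Real.sqrt (⟪Jrot (ξ' s), ξ σ - ξ s⟫ ^ 2) :=
          (Real.sqrt_sq_eq_abs _).symm
    _ = Real.sqrt (‖ξ σ - ξ s‖ ^ 2) := by rw [h0]
    _ = ‖ξ σ - ξ s‖ := Real.sqrt_sq (norm_nonneg _)
  have hA := lemA L ρ hρ ξ ξ' hunit hdisks hs hσ
  rw [habs] at hA
  have hw0 : ‖ξ σ - ξ s‖ = 0 := by nlinarith [norm_nonneg (ξ σ - ξ s)]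
  exact sub_eq_zero.mp (norm_eq_zero.mp hw0)

lemma lemGap (L ρ : ℝ) (hρ : 0 < ρ) (ξ ξ' : ℝ → EuclideanSpace ℝ (Fin 2))
    (hd : ∀ s ∈ Icc 0 L, HasDerivWithinAt ξ (ξ' s) (Icc 0 L) s)
    (hunit : ∀ s ∈ Icc 0 L, ‖ξ' s‖ = 1)
    (hdisks : ∀ s ∈ Icc 0 L, ∀ σ ∈ Icc 0 L,
      ξ σ ∉ ball (ξ s + ρ • Jrot (ξ' s)) ρ ∧ ξ σ ∉ ball (ξ s - ρ • Jrot (ξ' s)) ρ)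
    (d : ℝ) (hdmod : ∀ x ∈ Icc 0 L, ∀ y ∈ Icc 0 L, dist x y < d → dist (ξ x) (ξ y) < 2 * ρ)
    {s σ : ℝ} (hs : s ∈ Icc 0 L) (hσ : σ ∈ Icc 0 L) (hlt : s < σ) (heq : ξ s = ξ σ) :
    s + d ≤ σ := by
  have hsub : Icc s σ ⊆ Icc 0 L := Icc_subset_Icc hs.1 hσ.2
  have hcont : ContinuousOn ξ (Icc 0 L) := fun t ht => (hd t ht).continuousWithinAt
  set G : ℝ → ℝ := fun τ => ⟪ξ τ - ξ s, ξ τ - ξ s⟫ with hGdef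
  have hGcont : ContinuousOn G (Icc s σ) :=
    ((hcont.mono hsub).sub continuousOn_const).inner ((hcont.mono hsub).sub continuousOn_const)
  obtain ⟨m, hmem, hmax⟩ := isCompact_Icc.exists_isMaxOn (nonempty_Icc.mpr hlt.le) hGcont
  have hmIcc : m ∈ Icc 0 L := hsub hmem
  by_cases hGm : G m ≤ 0
  · exfalso
    have hconst : ∀ τ ∈ Icc s σ, ξ τ = ξ s := by
      intro τ hτ
      have h1 : G τ ≤ 0 := le_trans (hmax hτ) hGm
      exact sub_eq_zero.mp (real_inner_self_nonpos.mp h1)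
    have hmid : (s + σ) / 2 ∈ Ioo s σ := ⟨by linarith, by linarith⟩
    have hmid0 : 0 < (s + σ) / 2 := lt_of_le_of_lt hs.1 hmid.1
    have hmidL : (s + σ) / 2 < L := lt_of_lt_of_le hmid.2 hσ.2
    have hda : HasDerivAt ξ (ξ' ((s + σ) / 2)) ((s + σ) / 2) :=
      (hd _ ⟨hmid0.le, hmidL.le⟩).hasDerivAt (Icc_mem_nhds hmid0 hmidL)
    have hev : ξ =ᶠ[nhds ((s + σ) / 2)] fun _ => ξ s :=
      Filter.eventuallyEq_of_mem (isOpen_Ioo.mem_nhds hmid)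
        (fun τ hτ => hconst τ (Ioo_subset_Icc_self hτ))
    have hda0 : HasDerivAt ξ 0 ((s + σ) / 2) :=
      (hasDerivAt_const ((s + σ) / 2) (ξ s)).congr_of_eventuallyEq hev
    have hz : ξ' ((s + σ) / 2) = 0 := hda.unique hda0
    have hu := hunit _ ⟨hmid0.le, hmidL.le⟩
    rw [hz, norm_zero] at hu; norm_num at hu
  · push_neg at hGm
    have hGs : G s = 0 := by simp [hGdef]
    have hwσ : ξ σ - ξ s = 0 := sub_eq_zero.mpr heq.symm
    have hGσ : G σ = 0 := by simp only [hGdef, hwσ, inner_zero_left]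
    have hms : m ≠ s := by intro h; rw [h, hGs] at hGm; exact lt_irrefl 0 hGm
    have hmσ : m ≠ σ := by intro h; rw [h, hGσ] at hGm; exact lt_irrefl 0 hGm
    have hmIoo : m ∈ Ioo s σ := ⟨lt_of_le_of_ne hmem.1 (Ne.symm hms), lt_of_le_of_ne hmem.2 hmσ⟩
    have hm0 : 0 < m := lt_of_le_of_lt hs.1 hmIoo.1
    have hmL : m < L := lt_of_lt_of_le hmIoo.2 hσ.2
    have hdm : HasDerivAt (fun τ => ξ τ - ξ s) (ξ' m) m :=
      ((hd m hmIcc).hasDerivAt (Icc_mem_nhds hm0 hmL)).sub_const _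
    have hdG : HasDerivAt G (⟪ξ m - ξ s, ξ' m⟫ + ⟪ξ' m, ξ m - ξ s⟫) m := hdm.inner ℝ hdm
    have hzero := (hmax.isLocalMax (Icc_mem_nhds hmIoo.1 hmIoo.2)).hasDerivAt_eq_zero hdG
    have h2 : ⟪ξ' m, ξ m - ξ s⟫ = 0 := by
      have hsymm : ⟪ξ m - ξ s, ξ' m⟫ = ⟪ξ' m, ξ m - ξ s⟫ := real_inner_comm _ _
      rw [hsymm] at hzero; linarith
    have hperp : ⟪ξ' m, ξ s - ξ m⟫ = 0 := by
      rw [show ξ s - ξ m = -(ξ m - ξ s) by abel, inner_neg_right, h2, neg_zero]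
    by_cases hdist : ‖ξ s - ξ m‖ < 2 * ρ
    · exfalso
      have hsm : ξ s = ξ m := lemB L ρ hρ ξ ξ' hunit hdisks hmIcc hs hperp hdist
      have : ξ m - ξ s = 0 := sub_eq_zero.mpr hsm.symm
      rw [hGdef] at hGm; simp only [this, inner_zero_left] at hGm
      exact lt_irrefl 0 hGm
    · push_neg at hdist
      have hdd : d ≤ dist s m := by
        by_contra hcc
        push_neg at hcc
        have := hdmod s hs m hmIcc hcc
        rw [dist_eq_norm] at this
        linarith
      rw [Real.dist_eq, abs_of_nonpos (by linarith [hmIoo.1] : s - m ≤ 0)] at hdd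
      linarith [hmIoo.2]

set_option maxHeartbeats 1600000 in
/-- The two disks condition implies injectivity of the arc length parametrization. -/
theorem injective_of_two_disks_condition (L ρ : ℝ) (hL : 0 < L) (hρ : 0 < ρ)
    (ξ ξ' : ℝ → EuclideanSpace ℝ (Fin 2))
    (hd : ∀ s ∈ Icc 0 L, HasDerivWithinAt ξ (ξ' s) (Icc 0 L) s)
    (hc : ContinuousOn ξ' (Icc 0 L))
    (hunit : ∀ s ∈ Icc 0 L, ‖ξ' s‖ = 1)
    -- (a) the two tangent open disks of radius ρ at each point avoid the curve
    (hdisks : ∀ s ∈ Icc 0 L, ∀ σ ∈ Icc 0 L,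
      ξ σ ∉ ball (ξ s + ρ • Jrot (ξ' s)) ρ ∧ ξ σ ∉ ball (ξ s - ρ • Jrot (ξ' s)) ρ)
    -- (b) the outward open half disks of radius 2ρ at the endpoints avoid the curve
    (hminus : ∀ σ ∈ Icc 0 L, ¬(dist (ξ σ) (ξ 0) < 2 * ρ ∧ ⟪ξ σ - ξ 0, ξ' 0⟫ < 0))
    (hplus : ∀ σ ∈ Icc 0 L, ¬(dist (ξ σ) (ξ L) < 2 * ρ ∧ 0 < ⟪ξ σ - ξ L, ξ' L⟫)) :
    InjOn ξ (Icc 0 L) := by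
  intro x hx y hy hxy
  by_contra hne
  have hcont : ContinuousOn ξ (Icc 0 L) := fun t ht => (hd t ht).continuousWithinAt
  obtain ⟨d, hdpos, hdmod⟩ := Metric.uniformContinuousOn_iff.mp
    (isCompact_Icc.uniformContinuousOn_of_continuous hcont) (2 * ρ) (by positivity)
  have gap : ∀ {s σ : ℝ}, s ∈ Icc 0 L → σ ∈ Icc 0 L → s < σ → ξ s = ξ σ → s + d ≤ σ :=
    fun hs hσ hlt heq => lemGap L ρ hρ ξ ξ' hd hunit hdisks d hdmod hs hσ hlt heq
  -- clamping to get globally continuous representative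
  set cl : ℝ → ℝ := fun t => max 0 (min t L) with hcldef
  have hclmem : ∀ t, cl t ∈ Icc 0 L := fun t => ⟨le_max_left _ _, max_le hL.le (min_le_right _ _)⟩
  have hclcont : Continuous fun t => ξ (cl t) :=
    hcont.comp_continuous (continuous_const.max (continuous_id.min continuous_const)) hclmem
  have hcleq : ∀ t ∈ Icc 0 L, cl t = t := fun t ht => by
    simp only [hcldef]; rw [min_eq_left ht.2, max_eq_right ht.1]
  -- the compact set of self-intersection pairs
  set C : Set (ℝ × ℝ) :=
    (Icc 0 L ×ˢ Icc 0 L) ∩ ({q | ξ (cl q.1) = ξ (cl q.2)} ∩ {q | q.1 + d ≤ q.2}) with hCdef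
  have hCclosed : IsClosed C :=
    (isClosed_Icc.prod isClosed_Icc).inter
      ((isClosed_eq (hclcont.comp continuous_fst) (hclcont.comp continuous_snd)).inter
        (isClosed_le (continuous_fst.add continuous_const) continuous_snd))
  have hCcpt : IsCompact C :=
    (isCompact_Icc.prod isCompact_Icc).of_isClosed_subset hCclosed (fun q hq => hq.1)
  have hCmem : ∀ {τ ν : ℝ}, τ ∈ Icc 0 L → ν ∈ Icc 0 L → τ < ν → ξ τ = ξ ν → (τ, ν) ∈ C := by
    intro τ ν hτ hν hlt heq
    refine ⟨⟨hτ, hν⟩, ?_, gap hτ hν hlt heq⟩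
    show ξ (cl τ) = ξ (cl ν)
    rw [hcleq τ hτ, hcleq ν hν]; exact heq
  have hCne : C.Nonempty := by
    rcases lt_or_gt_of_ne hne with h | h
    · exact ⟨(x, y), hCmem hx hy h hxy⟩
    · exact ⟨(y, x), hCmem hy hx h hxy.symm⟩
  obtain ⟨⟨a, b⟩, ⟨⟨ha, hb⟩, hclab, hdab⟩, hqmin⟩ := hCcpt.exists_isMinOn hCne
    continuous_snd.continuousOn
  replace ha : a ∈ Icc 0 L := ha
  replace hb : b ∈ Icc 0 L := hb
  have hminb : ∀ {τ ν : ℝ}, τ ∈ Icc 0 L → ν ∈ Icc 0 L → τ < ν → ξ τ = ξ ν → b ≤ ν :=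
    fun hτ hν hlt heq => isMinOn_iff.mp hqmin _ (hCmem hτ hν hlt heq)
  simp only [mem_setOf_eq] at hclab hdab
  have hbp : ξ b = ξ a := by rw [← hcleq a ha, ← hcleq b hb, hclab]
  have hab : a < b := by linarith
  have h0a : 0 ≤ a := ha.1
  have hbL : b ≤ L := hb.2
  set u := ξ' a with hudef
  have huu : ‖u‖ = 1 := hunit a ha
  -- Step: the tangent at b is parallel to the tangent at a
  have hβ : ⟪Jrot u, ξ' b⟫ = 0 := by
    have hψd : HasDerivWithinAt (fun σ => ⟪Jrot u, ξ σ - ξ a⟫) ⟪Jrot u, ξ' b⟫ (Icc 0 L) b := by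
      have h1 : HasDerivWithinAt (fun σ => ξ σ - ξ a) (ξ' b) (Icc 0 L) b := (hd b hb).sub_const _
      have h2 := (hasDerivWithinAt_const b (Icc 0 L) (Jrot u)).inner ℝ h1
      simp only [inner_zero_left, add_zero] at h2
      exact h2
    have hbl : Filter.NeBot (nhdsWithin b (Icc 0 L \ {b})) := by
      have h1 : (nhdsWithin b (Ioo a b)).NeBot := by
        rw [← mem_closure_iff_nhdsWithin_neBot, closure_Ioo hab.ne]
        exact ⟨hab.le, le_refl b⟩
      exact h1.mono (nhdsWithin_mono b
        (fun t ht => ⟨⟨le_trans h0a ht.1.le, ht.2.le.trans hbL⟩, ne_of_lt ht.2⟩))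
    have tψ := hasDerivWithinAt_iff_tendsto_slope.mp hψd
    have tξ := hasDerivWithinAt_iff_tendsto_slope.mp (hd b hb)
    have hbound : ∀ σ ∈ Icc 0 L \ {b},
        |slope (fun σ => ⟪Jrot u, ξ σ - ξ a⟫) b σ| ≤ |σ - b| * ‖slope ξ b σ‖ ^ 2 / (2 * ρ) := by
      intro σ hσ
      have hσI : σ ∈ Icc 0 L := hσ.1
      have hσb : σ ≠ b := hσ.2
      have hApos : 0 < |σ - b| := abs_pos.mpr (sub_ne_zero.mpr hσb)
      have hA := lemA L ρ hρ ξ ξ' hunit hdisks ha hσI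
      have hsψ : slope (fun σ => ⟪Jrot u, ξ σ - ξ a⟫) b σ = (σ - b)⁻¹ * ⟪Jrot u, ξ σ - ξ a⟫ := by
        rw [slope_def_module]
        have hz : ⟪Jrot u, ξ b - ξ a⟫ = (0 : ℝ) := by
          rw [hbp, sub_self, inner_zero_right]
        rw [hz, sub_zero, smul_eq_mul]
      have hsξ : ‖slope ξ b σ‖ = |σ - b|⁻¹ * ‖ξ σ - ξ b‖ := by
        rw [slope_def_module, norm_smul, Real.norm_eq_abs, abs_inv]
      have hWab : ‖ξ σ - ξ b‖ = ‖ξ σ - ξ a‖ := by rw [hbp]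
      rw [hsψ, hsξ, hWab, abs_mul, abs_inv]
      have hmain : |⟪Jrot u, ξ σ - ξ a⟫| ≤ ‖ξ σ - ξ a‖ ^ 2 / (2 * ρ) := by
        rw [le_div_iff₀ (by positivity)]
        calc |⟪Jrot u, ξ σ - ξ a⟫| * (2 * ρ) = 2 * ρ * |⟪Jrot u, ξ σ - ξ a⟫| := by ring
        _ ≤ ‖ξ σ - ξ a‖ ^ 2 := hA
      have hre : ∀ A W : ℝ, A ≠ 0 → A * (A⁻¹ * W) ^ 2 / (2 * ρ) = A⁻¹ * (W ^ 2 / (2 * ρ)) := by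
        intro A W hA
        field_simp
      rw [hre _ _ (ne_of_gt hApos)]
      exact mul_le_mul_of_nonneg_left hmain (by positivity)
    have tg : Filter.Tendsto (fun σ => |σ - b| * ‖slope ξ b σ‖ ^ 2 / (2 * ρ))
        (nhdsWithin b (Icc 0 L \ {b})) (nhds 0) := by
      have t1 : Filter.Tendsto (fun σ : ℝ => |σ - b|) (nhdsWithin b (Icc 0 L \ {b})) (nhds 0) := by
        have h2 : Filter.Tendsto (fun σ : ℝ => |σ - b|) (nhds b) (nhds |b - b|) :=
          ((continuous_id.sub continuous_const).abs).tendsto b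
        rw [sub_self, abs_zero] at h2
        exact h2.mono_left nhdsWithin_le_nhds
      have t2 := (tξ.norm).pow 2
      have t3 := (t1.mul t2).div_const (2 * ρ)
      simpa using t3
    have habs0 : Filter.Tendsto (fun σ => |slope (fun σ => ⟪Jrot u, ξ σ - ξ a⟫) b σ|)
        (nhdsWithin b (Icc 0 L \ {b})) (nhds 0) :=
      squeeze_zero' (Filter.Eventually.of_forall fun σ => abs_nonneg _)
        (Filter.eventually_of_mem self_mem_nhdsWithin hbound) tg
    have := tendsto_nhds_unique (tψ.abs) habs0
    exact abs_eq_zero.mp this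
  have hpar : ⟪u, ξ' b⟫ = 1 ∨ ⟪u, ξ' b⟫ = -1 := by
    have hdec := decomp2 u (ξ' b) huu
    rw [hβ, zero_smul, add_zero] at hdec
    have hnb : ‖ξ' b‖ = 1 := hunit b hb
    rw [hdec, norm_smul, huu, mul_one, Real.norm_eq_abs] at hnb
    exact (abs_eq (by norm_num : (0:ℝ) ≤ 1)).mp hnb
  -- the tangential coordinate
  set φ : ℝ → ℝ := fun σ => ⟪u, ξ σ⟫ with hφdef
  have hφd : ∀ σ ∈ Icc 0 L, HasDerivWithinAt φ ⟪u, ξ' σ⟫ (Icc 0 L) σ := fun σ hσ => by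
    have h2 := (hasDerivWithinAt_const σ (Icc 0 L) u).inner ℝ (hd σ hσ)
    simp only [inner_zero_left, add_zero] at h2
    exact h2
  have hφc : ContinuousOn φ (Icc 0 L) := fun σ hσ => (hφd σ hσ).continuousWithinAt
  have mvt : ∀ x₁ y₁ : ℝ, 0 ≤ x₁ → x₁ < y₁ → y₁ ≤ L →
      ∃ c, x₁ < c ∧ c < y₁ ∧ φ y₁ - φ x₁ = ⟪u, ξ' c⟫ * (y₁ - x₁) := by
    intro x₁ y₁ h0 hxy hyL
    have hder : ∀ c ∈ Ioo x₁ y₁, HasDerivAt φ ⟪u, ξ' c⟫ c := by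
      intro c hcm
      have hc0 : 0 < c := lt_of_le_of_lt h0 hcm.1
      have hcL : c < L := lt_of_lt_of_le hcm.2 hyL
      exact (hφd c ⟨hc0.le, hcL.le⟩).hasDerivAt (Icc_mem_nhds hc0 hcL)
    obtain ⟨c, hcm, hceq⟩ := exists_hasDerivAt_eq_slope φ (fun c => ⟪u, ξ' c⟫) hxy
      (hφc.mono (Icc_subset_Icc h0 hyL)) hder
    refine ⟨c, hcm.1, hcm.2, ?_⟩
    rw [hceq, div_mul_cancel₀ _ (sub_ne_zero.mpr hxy.ne')]
  have key : ∀ c ∈ Icc 0 L, ∃ δ > 0, ∀ σ ∈ Icc 0 L, |σ - c| ≤ δ →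
      |⟪u, ξ' σ⟫ - ⟪u, ξ' c⟫| ≤ 1/4 ∧ ‖ξ σ - ξ c‖ ≤ ρ/4 := by
    intro c hcI
    have hc1 : ContinuousWithinAt (fun σ => ⟪u, ξ' σ⟫) (Icc 0 L) c :=
      (continuousOn_const.inner hc) c hcI
    have hc2 : ContinuousWithinAt ξ (Icc 0 L) c := hcont c hcI
    rw [Metric.continuousWithinAt_iff] at hc1 hc2
    obtain ⟨δ1, hδ1, h1⟩ := hc1 (1/4) (by norm_num)
    obtain ⟨δ2, hδ2, h2⟩ := hc2 (ρ/4) (by positivity)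
    refine ⟨min δ1 δ2 / 2, by positivity, fun σ hσ hle => ⟨?_, ?_⟩⟩
    · have hlt : dist σ c < δ1 := by
        rw [Real.dist_eq]
        have := min_le_left δ1 δ2; linarith
      have := h1 hσ hlt
      rw [Real.dist_eq] at this; exact this.le
    · have hlt : dist σ c < δ2 := by
        rw [Real.dist_eq]
        have := min_le_right δ1 δ2; linarith
      have := h2 hσ hlt
      rw [dist_eq_norm] at this; exact this.le
  obtain ⟨δa, hδa, hkeya⟩ := key a ha
  obtain ⟨δb, hδb, hkeyb⟩ := key b hb
  set δ := min (min δa δb) ((b - a)/4) with hδdef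
  have hδpos : 0 < δ := by
    apply lt_min (lt_min hδa hδb); linarith
  have hδ1 : δ ≤ δa := le_trans (min_le_left _ _) (min_le_left _ _)
  have hδ2 : δ ≤ δb := le_trans (min_le_left _ _) (min_le_right _ _)
  have hδ3 : δ ≤ (b - a)/4 := min_le_right _ _
  have hua1 : ⟪u, ξ' a⟫ = 1 := by
    rw [← hudef, real_inner_self_eq_norm_sq, huu]; norm_num
  have keya : ∀ σ ∈ Icc 0 L, |σ - a| ≤ δ → 3/4 ≤ ⟪u, ξ' σ⟫ ∧ ‖ξ σ - ξ a‖ ≤ ρ/4 := by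
    intro σ hσ hle
    obtain ⟨h1, h2⟩ := hkeya σ hσ (le_trans hle hδ1)
    rw [hua1] at h1
    exact ⟨by cases abs_le.mp h1; linarith, h2⟩
  -- the contradiction-producing matching argument
  have match_contra : ∀ τ ν : ℝ, τ ∈ Icc 0 L → ν ∈ Icc 0 L → τ < ν → ν < b →
      |τ - a| ≤ δ → |ν - b| ≤ δ → φ ν = φ τ → False := by
    intro τ ν hτI hνI hτν hνb hτa hνbd hφeq
    have hperp : ⟪u, ξ ν - ξ τ⟫ = 0 := by
      rw [inner_sub_right]
      have : φ ν - φ τ = 0 := by rw [hφeq]; ring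
      simpa [hφdef] using this
    have hnν : ‖ξ ν - ξ a‖ ≤ ρ/4 := by
      have := (hkeyb ν hνI (le_trans hνbd hδ2)).2
      rw [hbp] at this; exact this
    have hnτ : ‖ξ τ - ξ a‖ ≤ ρ/4 := (keya τ hτI hτa).2
    have hw : ‖ξ ν - ξ τ‖ ≤ ρ/2 := by
      calc ‖ξ ν - ξ τ‖ = ‖(ξ ν - ξ a) - (ξ τ - ξ a)‖ := by rw [sub_sub_sub_cancel_right]
      _ ≤ ‖ξ ν - ξ a‖ + ‖ξ τ - ξ a‖ := norm_sub_le _ _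
      _ ≤ ρ/4 + ρ/4 := add_le_add hnν hnτ
      _ = ρ/2 := by ring
    have hτ34 : 3/4 ≤ ⟪u, ξ' τ⟫ := (keya τ hτI hτa).1
    have hwdec : ξ ν - ξ τ = ⟪Jrot u, ξ ν - ξ τ⟫ • Jrot u := by
      have h5 := decomp2 u (ξ ν - ξ τ) huu
      rw [hperp, zero_smul, zero_add] at h5
      exact h5
    have hJu : ‖Jrot u‖ = 1 := by rw [norm_jrot, huu]
    have hdir : |⟪Jrot (ξ' τ), ξ ν - ξ τ⟫| = ‖ξ ν - ξ τ‖ * ⟪u, ξ' τ⟫ := by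
      rw [hwdec, real_inner_smul_right, inner_jrot_jrot, norm_smul, Real.norm_eq_abs, hJu,
        mul_one, abs_mul]
      have h7 : ⟪ξ' τ, u⟫ = ⟪u, ξ' τ⟫ := real_inner_comm _ _
      rw [h7, abs_of_nonneg (by linarith : (0:ℝ) ≤ ⟪u, ξ' τ⟫)]
    have hA := lemA L ρ hρ ξ ξ' hunit hdisks hτI hνI
    rw [hdir] at hA
    have hw0 : ‖ξ ν - ξ τ‖ = 0 := by
      rcases (norm_nonneg (ξ ν - ξ τ)).eq_or_lt with h0 | h0
      · exact h0.symm
      · exfalso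
        rw [pow_two] at hA
        exact arith1 ρ (‖ξ ν - ξ τ‖) (⟪u, ξ' τ⟫) hρ h0 hτ34 hA hw
    have heqw : ξ τ = ξ ν := (sub_eq_zero.mp (norm_eq_zero.mp hw0)).symm
    have := hminb hτI hνI hτν heqw
    linarith
  rcases hpar with hpar1 | hpar2
  · -- tangent at b points the same way
    have keyb1 : ∀ σ ∈ Icc 0 L, |σ - b| ≤ δ → 3/4 ≤ ⟪u, ξ' σ⟫ := by
      intro σ hσ hle
      have h1 := (hkeyb σ hσ (le_trans hle hδ2)).1
      rw [hpar1] at h1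
      cases abs_le.mp h1; linarith
    rcases h0a.eq_or_lt with ha0 | ha0
    · -- a = 0 : contradiction with the half disk condition at 0
      set ν := b - δ with hνdef
      have hνa : a < ν := by simp only [hνdef]; linarith
      have hνI : ν ∈ Icc 0 L := ⟨by linarith, by simp only [hνdef]; linarith⟩
      obtain ⟨c, hc1, hc2, hceq⟩ := mvt ν b (by linarith) (by simp only [hνdef]; linarith) hbL
      have hcI : c ∈ Icc 0 L := ⟨by linarith [hνI.1], by linarith⟩
      have hcb : |c - b| ≤ δ := by
        rw [abs_of_nonpos (by linarith)]
        simp only [hνdef] at hc1; linarith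
      have h34 := keyb1 c hcI hcb
      have hδν : b - ν = δ := by simp only [hνdef]; ring
      rw [hδν] at hceq
      have hmul : 3/4 * δ ≤ ⟪u, ξ' c⟫ * δ := mul_le_mul_of_nonneg_right h34 hδpos.le
      have hφν : φ ν - φ b ≤ -(3/4) * δ := by linarith
      have hφab : φ b = φ a := by simp only [hφdef]; rw [hbp]
      have hνbd : |ν - b| ≤ δ := by
        rw [abs_of_nonpos (by simp only [hνdef]; linarith)]
        simp only [hνdef]; linarith
      have hdist : ‖ξ ν - ξ a‖ ≤ ρ/4 := by
        have h6 := (hkeyb ν hνI (le_trans hνbd hδ2)).2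
        rw [hbp] at h6; exact h6
      have h9 : ξ 0 = ξ a := by rw [← ha0]
      have h10 : ξ' 0 = ξ' a := by rw [← ha0]
      refine hminus ν hνI ⟨?_, ?_⟩
      · rw [dist_eq_norm, h9]
        linarith
      · have h7 : ⟪ξ ν - ξ a, ξ' a⟫ = φ ν - φ b := by
          rw [inner_sub_left]
          have h8 : ⟪ξ a, ξ' a⟫ = ⟪ξ b, ξ' a⟫ := by rw [hbp]
          rw [h8]
          simp only [hφdef, hudef]
          rw [real_inner_comm (ξ ν) (ξ' a), real_inner_comm (ξ b) (ξ' a)]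
        rw [h9, h10, h7]
        linarith
    · -- 0 < a : produce an earlier self-intersection
      set δ' := min δ a with hδ'def
      have hδ'pos : 0 < δ' := lt_min hδpos ha0
      have hδ'δ : δ' ≤ δ := min_le_left _ _
      have hδ'a : δ' ≤ a := min_le_right _ _
      set τ := a - δ'/2 with hτdef
      have hτ0 : 0 < τ := by simp only [hτdef]; linarith
      have hτI : τ ∈ Icc 0 L := ⟨hτ0.le, by simp only [hτdef]; linarith⟩
      obtain ⟨c1, hc11, hc12, hc1eq⟩ := mvt τ a hτ0.le (by simp only [hτdef]; linarith) (by linarith)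
      have hc1I : c1 ∈ Icc 0 L := ⟨by linarith [hτI.1], by linarith⟩
      have hc1a : |c1 - a| ≤ δ := by
        rw [abs_of_nonpos (by linarith)]
        simp only [hτdef] at hc11; linarith
      have hc1b : 3/4 ≤ ⟪u, ξ' c1⟫ := (keya c1 hc1I hc1a).1
      have hc1cs : ⟪u, ξ' c1⟫ ≤ 1 := by
        have := real_inner_le_norm u (ξ' c1)
        rw [huu, hunit c1 hc1I] at this; simpa using this
      have haτ : a - τ = δ'/2 := by simp only [hτdef]; ring
      rw [haτ] at hc1eq
      have hm1 : 3/4 * (δ'/2) ≤ ⟪u, ξ' c1⟫ * (δ'/2) :=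
        mul_le_mul_of_nonneg_right hc1b (by linarith)
      have hm2 : ⟪u, ξ' c1⟫ * (δ'/2) ≤ 1 * (δ'/2) :=
        mul_le_mul_of_nonneg_right hc1cs (by linarith)
      have hτlo : 3/8 * δ' ≤ φ a - φ τ := by linarith
      have hτhi : φ a - φ τ ≤ δ'/2 := by linarith
      obtain ⟨c2, hc21, hc22, hc2eq⟩ := mvt (b - δ') b (by linarith) (by linarith) hbL
      have hc2I : c2 ∈ Icc 0 L := ⟨by linarith, by linarith⟩
      have hc2b : |c2 - b| ≤ δ := by
        rw [abs_of_nonpos (by linarith)]; linarith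
      have hc2lo : 3/4 * δ' ≤ φ b - φ (b - δ') := by
        have h34 := keyb1 c2 hc2I hc2b
        have hbb : b - (b - δ') = δ' := by ring
        rw [hbb] at hc2eq
        have hm3 : 3/4 * δ' ≤ ⟪u, ξ' c2⟫ * δ' := mul_le_mul_of_nonneg_right h34 hδ'pos.le
        linarith
      have hφab : φ a = φ b := by simp only [hφdef]; rw [hbp]
      have hiv1 : φ (b - δ') < φ τ := by linarith
      have hiv2 : φ τ < φ b := by linarith
      have hsub : Icc (b - δ') b ⊆ Icc 0 L := Icc_subset_Icc (by linarith) hbL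
      obtain ⟨ν, hνIoo, hφν⟩ := intermediate_value_Ioo (by linarith : b - δ' ≤ b)
        (hφc.mono hsub) ⟨hiv1, hiv2⟩
      have hνI : ν ∈ Icc 0 L := ⟨by linarith [hνIoo.1], by linarith [hνIoo.2]⟩
      exact match_contra τ ν hτI hνI (by linarith [hνIoo.1]) hνIoo.2
        (by rw [abs_of_nonpos (by simp only [hτdef]; linarith)]; simp only [hτdef]; linarith)
        (by rw [abs_of_nonpos (by linarith [hνIoo.2])]; linarith [hνIoo.1]) hφν
  · -- tangent at b points the opposite way
    have keyb2 : ∀ σ ∈ Icc 0 L, |σ - b| ≤ δ → ⟪u, ξ' σ⟫ ≤ -(3/4) := by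
      intro σ hσ hle
      have h1 := (hkeyb σ hσ (le_trans hle hδ2)).1
      rw [hpar2] at h1
      cases abs_le.mp h1; linarith
    set τ := a + δ/2 with hτdef
    have hτI : τ ∈ Icc 0 L := ⟨by simp only [hτdef]; linarith, by simp only [hτdef]; linarith⟩
    obtain ⟨c1, hc11, hc12, hc1eq⟩ := mvt a τ h0a (by simp only [hτdef]; linarith)
      (by simp only [hτdef]; linarith)
    have hc1I : c1 ∈ Icc 0 L := ⟨by linarith, by linarith [hτI.2]⟩
    have hc1a : |c1 - a| ≤ δ := by
      rw [abs_of_nonneg (by linarith)]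
      simp only [hτdef] at hc12; linarith
    have hc1b : 3/4 ≤ ⟪u, ξ' c1⟫ := (keya c1 hc1I hc1a).1
    have hc1cs : ⟪u, ξ' c1⟫ ≤ 1 := by
      have := real_inner_le_norm u (ξ' c1)
      rw [huu, hunit c1 hc1I] at this; simpa using this
    have haτ : τ - a = δ/2 := by simp only [hτdef]; ring
    rw [haτ] at hc1eq
    have hm1 : 3/4 * (δ/2) ≤ ⟪u, ξ' c1⟫ * (δ/2) :=
      mul_le_mul_of_nonneg_right hc1b (by linarith)
    have hm2 : ⟪u, ξ' c1⟫ * (δ/2) ≤ 1 * (δ/2) :=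
      mul_le_mul_of_nonneg_right hc1cs (by linarith)
    have hτlo : 3/8 * δ ≤ φ τ - φ a := by linarith
    have hτhi : φ τ - φ a ≤ δ/2 := by linarith
    obtain ⟨c2, hc21, hc22, hc2eq⟩ := mvt (b - δ) b (by linarith) (by linarith) hbL
    have hc2I : c2 ∈ Icc 0 L := ⟨by linarith, by linarith⟩
    have hc2b : |c2 - b| ≤ δ := by
      rw [abs_of_nonpos (by linarith)]; linarith
    have hc2lo : φ b - φ (b - δ) ≤ -(3/4) * δ := by
      have h34 := keyb2 c2 hc2I hc2b
      have hbb : b - (b - δ) = δ := by ring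
      rw [hbb] at hc2eq
      have hm3 : ⟪u, ξ' c2⟫ * δ ≤ -(3/4) * δ := mul_le_mul_of_nonneg_right h34 hδpos.le
      linarith
    have hφab : φ a = φ b := by simp only [hφdef]; rw [hbp]
    have hiv1 : φ b < φ τ := by linarith
    have hiv2 : φ τ < φ (b - δ) := by linarith
    have hsub : Icc (b - δ) b ⊆ Icc 0 L := Icc_subset_Icc (by linarith) hbL
    obtain ⟨ν, hνIoo, hφν⟩ := intermediate_value_Ioo' (by linarith : b - δ ≤ b)
      (hφc.mono hsub) ⟨hiv1, hiv2⟩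
    have hνI : ν ∈ Icc 0 L := ⟨by linarith [hνIoo.1], by linarith [hνIoo.2]⟩
    have hτν : τ < ν := by
      have h1 : τ < b - δ := by simp only [hτdef]; linarith
      linarith [hνIoo.1]
    exact match_contra τ ν hτI hνI hτν hνIoo.2
      (by rw [abs_of_nonneg (by simp only [hτdef]; linarith)]; simp only [hτdef]; linarith)
      (by rw [abs_of_nonpos (by linarith [hνIoo.2])]; linarith [hνIoo.1]) hφν
end

section
/- Let D₁, D₂ ⊂ ℝ² be open disks of the same radius ρ with distinct centers c₁ ≠ c₂. Let p₁ ∈ ∂D₁ \ D₂ and p₂ ∈ ∂D₂ \ D₁, and let S₁ be the (half-open) radius segment of D₁ from p₁ to c₁ (excluding p₁) and S₂ the radius segment of D₂ from p₂ to c₂ (excluding p₂). Then S₁ ∩ S₂ = ∅. -/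
open Set

/-- Two (half-open) radius segments of equal-radius disks are disjoint, provided
each segment's boundary endpoint lies outside the other disk. -/
theorem radius_segments_disjoint (ρ : ℝ) (hρ : 0 < ρ)
    (c₁ c₂ p₁ p₂ : EuclideanSpace ℝ (Fin 2)) (hc : c₁ ≠ c₂)
    (hp₁ : ‖p₁ - c₁‖ = ρ) (hp₁' : ρ ≤ ‖p₁ - c₂‖)
    (hp₂ : ‖p₂ - c₂‖ = ρ) (hp₂' : ρ ≤ ‖p₂ - c₁‖) :
    ∀ t₁ ∈ Ioc (0 : ℝ) 1, ∀ t₂ ∈ Ioc (0 : ℝ) 1,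
      p₁ + t₁ • (c₁ - p₁) ≠ p₂ + t₂ • (c₂ - p₂) := by
  rintro t₁ ⟨ht₁0, ht₁1⟩ t₂ ⟨ht₂0, ht₂1⟩ h
  set x := p₁ + t₁ • (c₁ - p₁) with hx
  have hc₁p₁ : ‖c₁ - p₁‖ = ρ := by rw [norm_sub_rev]; exact hp₁
  have hc₂p₂ : ‖c₂ - p₂‖ = ρ := by rw [norm_sub_rev]; exact hp₂
  have hxp₁ : ‖x - p₁‖ = t₁ * ρ := by
    have e : x - p₁ = t₁ • (c₁ - p₁) := by rw [hx]; abel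
    rw [e, norm_smul, Real.norm_eq_abs, abs_of_pos ht₁0, hc₁p₁]
  have hxc₁ : ‖x - c₁‖ = (1 - t₁) * ρ := by
    have e : x - c₁ = (1 - t₁) • (p₁ - c₁) := by rw [hx]; module
    rw [e, norm_smul, Real.norm_eq_abs, abs_of_nonneg (by linarith), hp₁]
  have hxp₂ : ‖x - p₂‖ = t₂ * ρ := by
    have e : x - p₂ = t₂ • (c₂ - p₂) := by rw [h]; abel
    rw [e, norm_smul, Real.norm_eq_abs, abs_of_pos ht₂0, hc₂p₂]
  have hxc₂ : ‖x - c₂‖ = (1 - t₂) * ρ := by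
    have e : x - c₂ = (1 - t₂) • (p₂ - c₂) := by rw [h]; module
    rw [e, norm_smul, Real.norm_eq_abs, abs_of_nonneg (by linarith), hp₂]
  -- triangle inequality through x, both ways
  have tri₁ : ‖p₁ - c₂‖ ≤ t₁ * ρ + (1 - t₂) * ρ := by
    calc ‖p₁ - c₂‖ ≤ ‖p₁ - x‖ + ‖x - c₂‖ := norm_sub_le_norm_sub_add_norm_sub _ _ _
    _ = t₁ * ρ + (1 - t₂) * ρ := by rw [norm_sub_rev p₁ x, hxp₁, hxc₂]
  have tri₂ : ‖p₂ - c₁‖ ≤ t₂ * ρ + (1 - t₁) * ρ := by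
    calc ‖p₂ - c₁‖ ≤ ‖p₂ - x‖ + ‖x - c₁‖ := norm_sub_le_norm_sub_add_norm_sub _ _ _
    _ = t₂ * ρ + (1 - t₁) * ρ := by rw [norm_sub_rev p₂ x, hxp₂, hxc₁]
  have ht : t₁ = t₂ := by nlinarith
  subst ht
  have heq : ‖p₁ - c₂‖ = ρ := le_antisymm (by linarith) hp₁'
  have hdist : dist p₁ x + dist x c₂ = dist p₁ c₂ := by
    rw [dist_eq_norm, dist_eq_norm, dist_eq_norm, norm_sub_rev p₁ x, hxp₁, hxc₂, heq]
    ring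
  have hseg : x ∈ segment ℝ p₁ c₂ := (dist_add_dist_eq_iff.mp hdist).mem_segment
  obtain ⟨a, b, ha, hb, hab, hxs⟩ := hseg
  have ha' : a = 1 - b := by linarith
  subst ha'
  have e : x - p₁ = b • (c₂ - p₁) := by rw [← hxs]; module
  have hb' : b * ρ = t₁ * ρ := by
    have : ‖x - p₁‖ = b * ρ := by
      rw [e, norm_smul, Real.norm_eq_abs, abs_of_nonneg hb, norm_sub_rev, heq]
    linarith [hxp₁ ▸ this]
  have hbt : b = t₁ := mul_right_cancel₀ hρ.ne' hb'
  have e1 : x - p₁ = t₁ • (c₁ - p₁) := by rw [hx]; abel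
  have e2 : t₁ • (c₁ - p₁) = t₁ • (c₂ - p₁) := by rw [← e1, e, hbt]
  have h3 := smul_right_injective (EuclideanSpace ℝ (Fin 2)) ht₁0.ne' e2
  exact hc (sub_left_injective h3)
end
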